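/- arXiv:2509.09885 — 5 statements merged into one kernel-verified Lean document; each statement's English description precedes it below -/
import Mathlib

section
/- Let N be a squarefree positive integer and let Σ = {(t, t²) : t ∈ ℤ/Nℤ} be the parabola in (ℤ/Nℤ)². Then for every function f : (ℤ/Nℤ)² → ℂ, ( (1/|Σ|) · Σ_{m∈Σ} |f̂(m)|² )^{1/2} ≤ 2^{ω(N)/4} · N^{-1} · ( Σ_{x∈(ℤ/Nℤ)²} |f(x)|^{4/3} )^{3/4}, where ω(N) denotes the number of distinct prime divisors of N. -/
open scoped BigOperators

/-- Normalized Fourier transform on `(ℤ/Nℤ)²`: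
`f̂(m) = N⁻¹ ∑ₓ f(x) e^{-2πi (x·m)/N}` where `x·m = x₁m₁ + x₂m₂`. -/
noncomputable def dft (N : ℕ) [NeZero N] (f : ZMod N × ZMod N → ℂ)
    (m : ZMod N × ZMod N) : ℂ :=
  (N : ℂ)⁻¹ * ∑ x : ZMod N × ZMod N,
    f x * Complex.exp (-2 * Real.pi * Complex.I *
      (((x.1 * m.1 + x.2 * m.2).val : ℕ) : ℂ) / (N : ℂ))

/-- The parabola `Σ = {(t, t²) : t ∈ ℤ/Nℤ}` in `(ℤ/Nℤ)²`. -/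
def parabola (N : ℕ) [NeZero N] : Finset (ZMod N × ZMod N) :=
  Finset.univ.image (fun t : ZMod N => (t, t ^ 2))

open Finset Complex
open scoped ComplexConjugate

section Aux
variable (N : ℕ) [NeZero N]


variable (N : ℕ) [NeZero N]

/-- `E a = exp (-2πi a/N)` as a function on `ZMod N`. -/
noncomputable def EE (a : ZMod N) : ℂ := ZMod.stdAddChar (-a)

lemma EE_add (a b : ZMod N) : EE N (a + b) = EE N a * EE N b := by
  simp [EE, neg_add, AddChar.map_add_eq_mul, add_comm]

lemma EE_zero : EE N 0 = 1 := by simp [EE]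

lemma abs_EE (a : ZMod N) : ‖EE N a‖ = 1 := by
  simp [EE, ZMod.stdAddChar_apply, Circle.norm_coe]

lemma conj_EE (a : ZMod N) : conj (EE N a) = EE N (-a) := by
  simp only [EE, neg_neg, ZMod.stdAddChar_apply, ← Circle.coe_inv_eq_conj,
    ← AddChar.map_neg_eq_inv, neg_neg]

lemma sum_EE (c : ZMod N) :
    ∑ u : ZMod N, EE N (u * c) = if c = 0 then (N : ℂ) else 0 := by
  have h : ∀ u : ZMod N, EE N (u * c) = (ZMod.stdAddChar (N := N)).mulShift (-c) u := by
    intro u; simp [EE, AddChar.mulShift_apply]; ring_nf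
  simp only [h]
  split_ifs with hc
  · simp [hc, AddChar.mulShift_apply, card_univ]
  · refine AddChar.sum_eq_zero_of_ne_one ?_
    exact ZMod.isPrimitive_stdAddChar N (neg_ne_zero.mpr hc)

lemma sum_EE2 (v : ZMod N × ZMod N) :
    ∑ x : ZMod N × ZMod N, EE N (x.1 * v.1 + x.2 * v.2)
      = if v = 0 then ((N : ℂ))^2 else 0 := by
  rw [Fintype.sum_prod_type]
  simp only [EE_add]
  rw [← Finset.sum_mul_sum]
  rw [sum_EE, sum_EE]
  rcases eq_or_ne v 0 with hv | hv
  · simp [hv, Prod.fst_zero, Prod.snd_zero, sq]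
  · have : v.1 ≠ 0 ∨ v.2 ≠ 0 := by
      by_contra h
      push_neg at h
      exact hv (Prod.ext h.1 h.2)
    rcases this with h | h
    · simp [h, hv]
    · simp [h, hv]



lemma card_quad_prime (p : ℕ) [NeZero p] (hp : p.Prime) (s c : ZMod p) :
    (univ.filter (fun t : ZMod p => 2*t^2 - 2*s*t + c = 0)).card ≤ 2 := by
  haveI := Fact.mk hp
  rcases eq_or_ne p 2 with rfl | hp2
  · exact le_trans (card_filter_le _ _) (by simp)
  · have h2 : (2 : ZMod p) ≠ 0 := by
      intro h0
      have hdvd : p ∣ 2 := by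
        rw [← ZMod.natCast_eq_zero_iff 2 p]
        push_cast
        exact h0
      exact hp2 ((Nat.prime_dvd_prime_iff_eq hp Nat.prime_two).mp hdvd)
    by_contra h
    push_neg at h
    obtain ⟨x, y, z, hx, hy, hz, hxy, hxz, hyz⟩ := Finset.two_lt_card_iff.mp h
    rw [mem_filter] at hx hy hz
    have key : ∀ a b : ZMod p, 2*a^2 - 2*s*a + c = 0 → 2*b^2 - 2*s*b + c = 0 → a ≠ b →
        2*a + 2*b - 2*s = 0 := by
      intro a b ha hb hab
      have h1 : (a - b) * (2*a + 2*b - 2*s) = 0 := by linear_combination ha - hb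
      rcases mul_eq_zero.mp h1 with h1 | h1
      · exact absurd (sub_eq_zero.mp h1) hab
      · exact h1
    have k1 := key x y hx.2 hy.2 hxy
    have k2 := key x z hx.2 hz.2 hxz
    have : (2 : ZMod p) * (y - z) = 0 := by linear_combination k1 - k2
    rcases mul_eq_zero.mp this with h' | h'
    · exact h2 h'
    · exact hyz (sub_eq_zero.mp h')

lemma card_quad_le : ∀ N : ℕ, ∀ [NeZero N], Squarefree N → ∀ s c : ZMod N,
    (univ.filter (fun t : ZMod N => 2*t^2 - 2*s*t + c = 0)).card
      ≤ 2 ^ N.primeFactors.card := by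
  intro N
  induction N using Nat.strong_induction_on with
  | _ N ih =>
    intro inst hsf s c
    have hN0 : N ≠ 0 := inst.out
    rcases eq_or_ne N 1 with rfl | hN1
    · exact le_trans (card_filter_le _ _) (by simp)
    · obtain ⟨p, hpp, hpd⟩ : ∃ p, p.Prime ∧ p ∣ N :=
        ⟨N.minFac, Nat.minFac_prime hN1, N.minFac_dvd⟩
      obtain ⟨m, hm⟩ := hpd
      have hm0 : m ≠ 0 := by rintro rfl; simp at hm; exact hN0 hm
      have hpm : ¬ p ∣ m := by
        intro hd
        have hdd : p * p ∣ N := by rw [hm]; exact mul_dvd_mul_left p hd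
        exact hpp.one_lt.ne' (Nat.isUnit_iff.mp (hsf p hdd))
      have hcop : Nat.Coprime p m := (Nat.Prime.coprime_iff_not_dvd hpp).mpr hpm
      subst hm
      haveI : NeZero m := ⟨hm0⟩
      haveI : NeZero p := ⟨hpp.pos.ne'⟩
      have hmlt : m < p * m := by
        have := hpp.one_lt
        calc m = 1 * m := (one_mul m).symm
        _ < p * m := by
          exact Nat.mul_lt_mul_of_lt_of_le this (le_refl m) (Nat.pos_of_ne_zero hm0)
      have hmsf : Squarefree m := hsf.squarefree_of_dvd ⟨p, mul_comm p m⟩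
      -- prime factors
      have hfact : (p * m).primeFactors.card = m.primeFactors.card + 1 := by
        rw [Nat.primeFactors_mul hpp.pos.ne' hm0, Nat.Prime.primeFactors hpp]
        rw [Finset.card_union_of_disjoint]
        · simp [add_comm]
        · simp only [Finset.disjoint_singleton_left]
          exact fun hmem => hpm (Nat.dvd_of_mem_primeFactors hmem)
      -- CRT
      let φ : ZMod (p * m) ≃+* ZMod p × ZMod m := ZMod.chineseRemainder hcop
      have hmaps : ∀ t ∈ univ.filter (fun t : ZMod (p*m) => 2*t^2 - 2*s*t + c = 0),
          φ t ∈ (univ.filter (fun u : ZMod p => 2*u^2 - 2*(φ s).1*u + (φ c).1 = 0)) ×ˢ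
            (univ.filter (fun u : ZMod m => 2*u^2 - 2*(φ s).2*u + (φ c).2 = 0)) := by
        intro t ht
        rw [mem_filter] at ht
        have h0 : φ (2*t^2 - 2*s*t + c) = 0 := by rw [ht.2]; exact map_zero φ
        rw [Finset.mem_product, mem_filter, mem_filter]
        refine ⟨⟨mem_univ _, ?_⟩, mem_univ _, ?_⟩
        · have := congrArg Prod.fst h0
          simpa [map_add, map_sub, map_mul, map_pow, map_ofNat] using this
        · have := congrArg Prod.snd h0
          simpa [map_add, map_sub, map_mul, map_pow, map_ofNat] using this
      have hinj : Set.InjOn (fun t => φ t)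
          ↑(univ.filter (fun t : ZMod (p*m) => 2*t^2 - 2*s*t + c = 0)) :=
        fun a _ b _ h => φ.injective h
      have hcard := Finset.card_le_card_of_injOn _ hmaps hinj
      rw [Finset.card_product] at hcard
      refine le_trans hcard ?_
      rw [hfact, pow_succ, mul_comm (2 ^ m.primeFactors.card) 2]
      exact Nat.mul_le_mul (card_quad_prime p hpp _ _)
        (ih m hmlt hmsf _ _)

lemma card_pairs_le (N : ℕ) [NeZero N] (hsf : Squarefree N) (s : ZMod N × ZMod N) :
    (univ.filter (fun pr : ZMod N × ZMod N =>
        pr.1 + pr.2 = s.1 ∧ pr.1 ^ 2 + pr.2 ^ 2 = s.2)).card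
      ≤ 2 ^ N.primeFactors.card := by
  refine le_trans (Finset.card_le_card_of_injOn (fun pr => pr.1) ?_ ?_)
    (card_quad_le N hsf s.1 (s.1 ^ 2 - s.2))
  · intro pr hpr
    rw [Finset.mem_coe, mem_filter] at hpr ⊢
    obtain ⟨-, h1, h2⟩ := hpr
    refine ⟨mem_univ _, ?_⟩
    linear_combination (pr.1 - pr.2 - s.1) * h1 + h2
  · intro a ha b hb hab
    simp only [coe_filter, Set.mem_setOf_eq] at ha hb
    have h2 : a.2 = b.2 := by
      have := ha.2.1.trans hb.2.1.symm
      simpa [hab] using this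
    exact Prod.ext hab h2

namespace Step4
variable (a : ZMod N → ℂ)

noncomputable def G (x : ZMod N × ZMod N) : ℂ :=
  ∑ t : ZMod N, a t * EE N (x.1 * t + x.2 * t ^ 2)

noncomputable def F (p : ZMod N × ZMod N) (x : ZMod N × ZMod N) : ℂ :=
  (a p.1 * a p.2) * EE N (x.1 * (p.1 + p.2) + x.2 * (p.1 ^ 2 + p.2 ^ 2))

lemma hGG (x : ZMod N × ZMod N) :
    G N a x * G N a x = ∑ p : ZMod N × ZMod N, F N a p x := by
  rw [G, Finset.sum_mul_sum, ← Fintype.sum_prod_type']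
  refine Fintype.sum_congr _ _ fun p => ?_
  rw [F, mul_mul_mul_comm, ← EE_add]
  congr 1
  ring

lemma FconjF (p q x : ZMod N × ZMod N) :
    F N a p x * conj (F N a q x)
      = (a p.1 * a p.2 * conj (a q.1) * conj (a q.2)) *
        EE N (x.1 * ((p.1 + p.2) - (q.1 + q.2)) +
          x.2 * ((p.1 ^ 2 + p.2 ^ 2) - (q.1 ^ 2 + q.2 ^ 2))) := by
  rw [F, F, map_mul, map_mul, conj_EE, mul_mul_mul_comm, ← EE_add]
  rw [mul_assoc (a p.1) (a p.2)]
  congr 1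
  · ring
  · congr 1
    ring

lemma sum_EE2' (v1 v2 : ZMod N) :
    ∑ x : ZMod N × ZMod N, EE N (x.1 * v1 + x.2 * v2)
      = if v1 = 0 ∧ v2 = 0 then ((N : ℂ))^2 else 0 := by
  have := sum_EE2 N (v1, v2)
  simpa [Prod.ext_iff] using this

lemma sum_x :
    ∑ x : ZMod N × ZMod N, (G N a x * conj (G N a x))^2
      = ∑ p : ZMod N × ZMod N, ∑ q : ZMod N × ZMod N,
          (a p.1 * a p.2 * conj (a q.1) * conj (a q.2)) *
          (if (p.1 + p.2) - (q.1 + q.2) = 0 ∧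
              (p.1 ^ 2 + p.2 ^ 2) - (q.1 ^ 2 + q.2 ^ 2) = 0
           then ((N : ℂ))^2 else 0) := by
  have h1 : ∀ x, (G N a x * conj (G N a x))^2
      = ∑ p : ZMod N × ZMod N, ∑ q : ZMod N × ZMod N, F N a p x * conj (F N a q x) := by
    intro x
    calc (G N a x * conj (G N a x))^2
        = (G N a x * G N a x) * (conj (G N a x) * conj (G N a x)) := by ring
      _ = (G N a x * G N a x) * conj (G N a x * G N a x) := by rw [map_mul]
      _ = (∑ p : ZMod N × ZMod N, F N a p x) * conj (∑ p : ZMod N × ZMod N, F N a p x) := by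
          rw [hGG]
      _ = (∑ p : ZMod N × ZMod N, F N a p x) * (∑ q : ZMod N × ZMod N, conj (F N a q x)) := by
          rw [map_sum]
      _ = _ := Finset.sum_mul_sum _ _ _ _
  simp only [h1]
  rw [Finset.sum_comm]
  refine sum_congr rfl fun p _ => ?_
  rw [Finset.sum_comm]
  refine sum_congr rfl fun q _ => ?_
  calc ∑ x : ZMod N × ZMod N, F N a p x * conj (F N a q x)
      = ∑ x : ZMod N × ZMod N, (a p.1 * a p.2 * conj (a q.1) * conj (a q.2)) *
          EE N (x.1 * ((p.1 + p.2) - (q.1 + q.2)) +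
            x.2 * ((p.1 ^ 2 + p.2 ^ 2) - (q.1 ^ 2 + q.2 ^ 2))) := by
        simp only [FconjF]
    _ = (a p.1 * a p.2 * conj (a q.1) * conj (a q.2)) *
        ∑ x : ZMod N × ZMod N, EE N (x.1 * ((p.1 + p.2) - (q.1 + q.2)) +
            x.2 * ((p.1 ^ 2 + p.2 ^ 2) - (q.1 ^ 2 + q.2 ^ 2))) := by
        rw [Finset.mul_sum]
    _ = _ := by rw [sum_EE2']

lemma abs_step :
    ∑ x : ZMod N × ZMod N, (‖G N a x‖)^4
      ≤ ∑ p : ZMod N × ZMod N, ∑ q : ZMod N × ZMod N,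
          (‖a p.1‖ * ‖a p.2‖ *
            ‖a q.1‖ * ‖a q.2‖) *
          (if (p.1 + p.2) - (q.1 + q.2) = 0 ∧
              (p.1 ^ 2 + p.2 ^ 2) - (q.1 ^ 2 + q.2 ^ 2) = 0
           then ((N : ℝ))^2 else 0) := by
  have hcast : ((∑ x : ZMod N × ZMod N, (‖G N a x‖)^4 : ℝ) : ℂ)
      = ∑ x : ZMod N × ZMod N, (G N a x * conj (G N a x))^2 := by
    push_cast
    refine Finset.sum_congr rfl fun x _ => ?_
    rw [Complex.mul_conj, ← Complex.sq_norm]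
    push_cast
    ring
  have h0 : ∑ x : ZMod N × ZMod N, (‖G N a x‖)^4
      = ‖((∑ x : ZMod N × ZMod N, (‖G N a x‖)^4 : ℝ) : ℂ)‖ := by
    rw [Complex.norm_real, Real.norm_eq_abs]
    exact (_root_.abs_of_nonneg (by positivity)).symm
  rw [h0, hcast, sum_x]
  refine le_trans (norm_sum_le _ _) ?_
  refine Finset.sum_le_sum fun p _ => ?_
  refine le_trans (norm_sum_le _ _) ?_
  refine Finset.sum_le_sum fun q _ => ?_
  rw [norm_mul]
  simp only [norm_mul, Complex.norm_conj]
  refine mul_le_mul_of_nonneg_left ?_ (by positivity)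
  split_ifs
  · simp
  · simp

lemma quad_bound (hsf : Squarefree N) (b : ZMod N → ℝ) :
    ∑ p : ZMod N × ZMod N, ∑ q : ZMod N × ZMod N,
        (b p.1 * b p.2 * b q.1 * b q.2) *
        (if (p.1 + p.2) - (q.1 + q.2) = 0 ∧
            (p.1 ^ 2 + p.2 ^ 2) - (q.1 ^ 2 + q.2 ^ 2) = 0
         then ((N : ℝ))^2 else 0)
      ≤ (N : ℝ)^2 * (2:ℝ)^N.primeFactors.card * (∑ t : ZMod N, (b t)^2)^2 := by
  classical
  set γ : ZMod N × ZMod N → ZMod N × ZMod N := fun p => (p.1 + p.2, p.1 ^ 2 + p.2 ^ 2) with hγ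
  set A : ZMod N × ZMod N → ℝ := fun s => ∑ q ∈ univ.filter (fun q => γ q = s), b q.1 * b q.2
    with hA
  have hcond : ∀ p q : ZMod N × ZMod N,
      ((p.1 + p.2) - (q.1 + q.2) = 0 ∧ (p.1 ^ 2 + p.2 ^ 2) - (q.1 ^ 2 + q.2 ^ 2) = 0)
        ↔ γ q = γ p := by
    intro p q
    simp [hγ, Prod.ext_iff, sub_eq_zero, eq_comm]
  have hfiber : ∀ s : ZMod N × ZMod N,
      ((univ.filter (fun q => γ q = s)).card : ℝ) ≤ (2:ℝ)^N.primeFactors.card := by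
    intro s
    have h1 : (univ.filter (fun q => γ q = s)) =
        (univ.filter (fun q : ZMod N × ZMod N => q.1 + q.2 = s.1 ∧ q.1^2 + q.2^2 = s.2)) := by
      apply Finset.filter_congr
      intro q _
      simp [hγ, Prod.ext_iff]
    rw [h1]
    calc ((univ.filter (fun q : ZMod N × ZMod N =>
            q.1 + q.2 = s.1 ∧ q.1^2 + q.2^2 = s.2)).card : ℝ)
        ≤ ((2 ^ N.primeFactors.card : ℕ) : ℝ) := by
          exact_mod_cast card_pairs_le N hsf s
      _ = (2:ℝ)^N.primeFactors.card := by push_cast; ring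
  -- inner sum
  have hinner : ∀ p : ZMod N × ZMod N,
      ∑ q : ZMod N × ZMod N, (b p.1 * b p.2 * b q.1 * b q.2) *
        (if (p.1 + p.2) - (q.1 + q.2) = 0 ∧
            (p.1 ^ 2 + p.2 ^ 2) - (q.1 ^ 2 + q.2 ^ 2) = 0
         then ((N : ℝ))^2 else 0)
      = (N : ℝ)^2 * ((b p.1 * b p.2) * A (γ p)) := by
    intro p
    have : ∀ q : ZMod N × ZMod N, (b p.1 * b p.2 * b q.1 * b q.2) *
        (if (p.1 + p.2) - (q.1 + q.2) = 0 ∧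
            (p.1 ^ 2 + p.2 ^ 2) - (q.1 ^ 2 + q.2 ^ 2) = 0
         then ((N : ℝ))^2 else 0)
      = (if γ q = γ p then (N : ℝ)^2 * ((b p.1 * b p.2) * (b q.1 * b q.2)) else 0) := by
      intro q
      simp only [hcond p q]
      split_ifs
      · ring
      · ring
    simp only [this]
    rw [← Finset.sum_filter, ← Finset.mul_sum, ← Finset.mul_sum]
  simp only [hinner]
  rw [← Finset.mul_sum]
  have hmid : ∑ p : ZMod N × ZMod N, (b p.1 * b p.2) * A (γ p)
      = ∑ s : ZMod N × ZMod N, A s ^ 2 := by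
    rw [← Finset.sum_fiberwise univ γ (fun p => (b p.1 * b p.2) * A (γ p))]
    refine sum_congr rfl fun s _ => ?_
    have : ∀ p ∈ univ.filter (fun p => γ p = s),
        (b p.1 * b p.2) * A (γ p) = (b p.1 * b p.2) * A s := by
      intro p hp
      rw [(mem_filter.mp hp).2]
    rw [Finset.sum_congr rfl this, ← Finset.sum_mul, hA, sq]
  have hfinal : ∑ s : ZMod N × ZMod N, A s ^ 2
      ≤ (2:ℝ)^N.primeFactors.card * (∑ t : ZMod N, (b t)^2)^2 := by
    have h1 : ∀ s : ZMod N × ZMod N, A s ^ 2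
        ≤ (2:ℝ)^N.primeFactors.card *
          ∑ q ∈ univ.filter (fun q => γ q = s), (b q.1 * b q.2)^2 := by
      intro s
      calc A s ^ 2 ≤ ((univ.filter (fun q => γ q = s)).card : ℝ) *
            ∑ q ∈ univ.filter (fun q => γ q = s), (b q.1 * b q.2)^2 := by
            rw [hA]
            exact_mod_cast sq_sum_le_card_mul_sum_sq
              (s := univ.filter (fun q => γ q = s)) (f := fun q => b q.1 * b q.2)
        _ ≤ _ := by
            refine mul_le_mul_of_nonneg_right (hfiber s) ?_
            positivity
    calc ∑ s : ZMod N × ZMod N, A s ^ 2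
        ≤ ∑ s : ZMod N × ZMod N, (2:ℝ)^N.primeFactors.card *
            ∑ q ∈ univ.filter (fun q => γ q = s), (b q.1 * b q.2)^2 :=
          Finset.sum_le_sum fun s _ => h1 s
      _ = (2:ℝ)^N.primeFactors.card *
            ∑ s : ZMod N × ZMod N, ∑ q ∈ univ.filter (fun q => γ q = s), (b q.1 * b q.2)^2 := by
          rw [← Finset.mul_sum]
      _ = (2:ℝ)^N.primeFactors.card * ∑ q : ZMod N × ZMod N, (b q.1 * b q.2)^2 := by
          rw [Finset.sum_fiberwise univ γ (fun q => (b q.1 * b q.2)^2)]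
      _ = (2:ℝ)^N.primeFactors.card * (∑ t : ZMod N, (b t)^2)^2 := by
          congr 1
          rw [sq (∑ t : ZMod N, (b t)^2), Finset.sum_mul_sum, ← Fintype.sum_prod_type']
          refine Fintype.sum_congr _ _ fun q => ?_
          ring
  calc (N : ℝ)^2 * ∑ p : ZMod N × ZMod N, (b p.1 * b p.2) * A (γ p)
      = (N : ℝ)^2 * ∑ s : ZMod N × ZMod N, A s ^ 2 := by rw [hmid]
    _ ≤ (N : ℝ)^2 * ((2:ℝ)^N.primeFactors.card * (∑ t : ZMod N, (b t)^2)^2) := by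
        refine mul_le_mul_of_nonneg_left hfinal (by positivity)
    _ = _ := by ring

lemma L4 (hsf : Squarefree N) :
    ∑ x : ZMod N × ZMod N, (‖G N a x‖)^4
      ≤ (N : ℝ)^2 * (2:ℝ)^N.primeFactors.card *
        (∑ t : ZMod N, (‖a t‖)^2)^2 :=
  le_trans (abs_step N a) (quad_bound N hsf (fun t => ‖a t‖))

end Step4


lemma EE_apply (a : ZMod N) :
    Complex.exp (-2 * Real.pi * Complex.I * ((a.val : ℕ) : ℂ) / (N : ℂ)) = EE N a := by
  have h1 : ((-(a.val : ℤ) : ℤ) : ZMod N) = -a := by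
    push_cast
    rw [ZMod.natCast_zmod_val]
  rw [EE]
  rw [show -a = ((-(a.val : ℤ) : ℤ) : ZMod N) from h1.symm]
  rw [ZMod.stdAddChar_coe]
  congr 1
  push_cast
  ring

lemma dft_eq (f : ZMod N × ZMod N → ℂ) (m : ZMod N × ZMod N) :
    dft N f m = (N : ℂ)⁻¹ * ∑ x : ZMod N × ZMod N,
      f x * EE N (x.1 * m.1 + x.2 * m.2) := by
  rw [dft]
  congr 1
  exact sum_congr rfl fun x _ => by rw [EE_apply]

section Duality
variable (f : ZMod N × ZMod N → ℂ)

noncomputable def dd (t : ZMod N) : ℂ := dft N f (t, t ^ 2)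
noncomputable def aa (t : ZMod N) : ℂ := conj (dd N f t)

lemma S_eq :
    ((∑ t : ZMod N, (‖dd N f t‖)^2 : ℝ) : ℂ)
      = (N : ℂ)⁻¹ * ∑ x : ZMod N × ZMod N, f x * Step4.G N (aa N f) x := by
  have h1 : ∀ t : ZMod N, ((‖dd N f t‖ : ℂ))^2
      = aa N f t * dd N f t := by
    intro t
    rw [aa, mul_comm, Complex.mul_conj, ← Complex.sq_norm]
    push_cast
    ring
  have hdt : ∀ t : ZMod N, dd N f t
      = (N : ℂ)⁻¹ * ∑ x : ZMod N × ZMod N, f x * EE N (x.1 * t + x.2 * t ^ 2) := by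
    intro t
    exact dft_eq N f (t, t ^ 2)
  calc ((∑ t : ZMod N, (‖dd N f t‖)^2 : ℝ) : ℂ)
      = ∑ t : ZMod N, aa N f t * dd N f t := by
        push_cast
        exact sum_congr rfl fun t _ => h1 t
    _ = ∑ t : ZMod N, (N : ℂ)⁻¹ *
          ∑ x : ZMod N × ZMod N, f x * (aa N f t * EE N (x.1 * t + x.2 * t ^ 2)) := by
        refine sum_congr rfl fun t _ => ?_
        rw [hdt t, mul_left_comm]
        congr 1
        rw [Finset.mul_sum]
        exact sum_congr rfl fun x _ => by ring
    _ = (N : ℂ)⁻¹ * ∑ t : ZMod N,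
          ∑ x : ZMod N × ZMod N, f x * (aa N f t * EE N (x.1 * t + x.2 * t ^ 2)) := by
        rw [Finset.mul_sum]
    _ = (N : ℂ)⁻¹ * ∑ x : ZMod N × ZMod N,
          ∑ t : ZMod N, f x * (aa N f t * EE N (x.1 * t + x.2 * t ^ 2)) := by
        rw [Finset.sum_comm]
    _ = (N : ℂ)⁻¹ * ∑ x : ZMod N × ZMod N, f x * Step4.G N (aa N f) x := by
        congr 1
        refine sum_congr rfl fun x _ => ?_
        rw [Step4.G, Finset.mul_sum]

lemma S_le_holder :
    (∑ t : ZMod N, (‖dd N f t‖)^2 : ℝ)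
      ≤ (N : ℝ)⁻¹ * ((∑ x : ZMod N × ZMod N, ‖f x‖ ^ ((4:ℝ)/3)) ^ ((3:ℝ)/4)
          * (∑ x : ZMod N × ZMod N, (‖Step4.G N (aa N f) x‖)^4) ^ ((1:ℝ)/4)) := by
  have hS0 : (0:ℝ) ≤ ∑ t : ZMod N, (‖dd N f t‖)^2 := by positivity
  have habs : (∑ t : ZMod N, (‖dd N f t‖)^2 : ℝ)
      = ‖((∑ t : ZMod N, (‖dd N f t‖)^2 : ℝ) : ℂ)‖ := by
    rw [Complex.norm_real, Real.norm_eq_abs]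
    exact (_root_.abs_of_nonneg hS0).symm
  rw [habs, S_eq]
  rw [norm_mul]
  have hNinv : ‖(N : ℂ)⁻¹‖ = (N : ℝ)⁻¹ := by
    rw [norm_inv, Complex.norm_natCast]
  rw [hNinv]
  refine mul_le_mul_of_nonneg_left ?_ (by positivity)
  have hstep : ‖∑ x : ZMod N × ZMod N, f x * Step4.G N (aa N f) x‖
      ≤ ∑ x : ZMod N × ZMod N, ‖f x‖ * ‖Step4.G N (aa N f) x‖ := by
    refine le_trans (norm_sum_le _ _) (le_of_eq ?_)
    exact sum_congr rfl fun x _ => by rw [norm_mul]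
  refine le_trans hstep ?_
  · -- Hölder
    have hpq : Real.HolderConjugate ((4:ℝ)/3) 4 := by
      constructor
      · norm_num
      · norm_num
      · norm_num
    have := Real.inner_le_Lp_mul_Lq (univ : Finset (ZMod N × ZMod N))
      (fun x => ‖f x‖) (fun x => ‖Step4.G N (aa N f) x‖) hpq
    simp only [abs_norm] at this
    calc ∑ x : ZMod N × ZMod N, ‖f x‖ * ‖Step4.G N (aa N f) x‖
        ≤ (∑ x : ZMod N × ZMod N, ‖f x‖ ^ ((4:ℝ)/3)) ^ (1/((4:ℝ)/3))
            * (∑ x : ZMod N × ZMod N, ‖Step4.G N (aa N f) x‖ ^ (4:ℝ)) ^ (1/(4:ℝ)) :=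
          this
      _ = _ := by
          rw [show (1/((4:ℝ)/3)) = (3:ℝ)/4 by norm_num, show (1/(4:ℝ)) = (1:ℝ)/4 by norm_num]
          congr 2
          refine sum_congr rfl fun x _ => ?_
          rw [show ((4:ℝ)) = ((4:ℕ):ℝ) by norm_num, Real.rpow_natCast]
end Duality

end Aux

theorem restriction_squarefree (N : ℕ) [NeZero N] (hN : Squarefree N)
    (f : ZMod N × ZMod N → ℂ) :
    (((parabola N).card : ℝ)⁻¹ *
        ∑ m ∈ parabola N, ‖dft N f m‖ ^ 2) ^ ((1 : ℝ) / 2) ≤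
      (2 : ℝ) ^ ((N.primeFactors.card : ℝ) / 4) * (N : ℝ)⁻¹ *
        (∑ x : ZMod N × ZMod N, ‖f x‖ ^ ((4 : ℝ) / 3)) ^ ((3 : ℝ) / 4) := by
  classical
  have hNpos : (0:ℝ) < N := by
    exact_mod_cast Nat.pos_of_ne_zero (NeZero.ne N)
  have hinj : Function.Injective (fun t : ZMod N => (t, t ^ 2)) :=
    fun a b h => congrArg Prod.fst h
  have hcard : (parabola N).card = N := by
    rw [parabola, Finset.card_image_of_injective _ hinj, card_univ, ZMod.card]
  have hsum : ∑ m ∈ parabola N, ‖dft N f m‖ ^ 2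
      = ∑ t : ZMod N, ‖dd N f t‖ ^ 2 := by
    rw [parabola, Finset.sum_image (fun x _ y _ h => hinj h)]
    rfl
  rw [hcard, hsum]
  set S := ∑ t : ZMod N, ‖dd N f t‖ ^ 2 with hSdef
  set T := ∑ x : ZMod N × ZMod N, ‖f x‖ ^ ((4:ℝ)/3) with hTdef
  set U := ∑ x : ZMod N × ZMod N, (‖Step4.G N (aa N f) x‖)^4 with hUdef
  set ω := N.primeFactors.card with hω
  set K := (2:ℝ) ^ ω with hKdef
  have hS0 : 0 ≤ S := Finset.sum_nonneg fun t _ => by positivity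
  have hT0 : 0 ≤ T := Finset.sum_nonneg fun x _ => by positivity
  have hU0 : 0 ≤ U := Finset.sum_nonneg fun x _ => by positivity
  have hK0 : (0:ℝ) < K := by positivity
  have hKq : K ^ ((1:ℝ)/4) = (2:ℝ) ^ ((ω : ℝ) / 4) := by
    rw [hKdef, ← Real.rpow_natCast 2 ω, ← Real.rpow_mul (by norm_num : (0:ℝ) ≤ 2)]
    congr 1
    ring
  have hRHS0 : 0 ≤ (2 : ℝ) ^ ((ω : ℝ) / 4) * (N : ℝ)⁻¹ * T ^ ((3:ℝ)/4) := by positivity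
  rcases eq_or_lt_of_le hS0 with hS | hSpos
  · rw [← hS, mul_zero, Real.zero_rpow (by norm_num : ((1:ℝ)/2) ≠ 0)]
    exact hRHS0
  · -- main case
    have haa : ∑ t : ZMod N, ‖aa N f t‖ ^ 2 = S := by
      rw [hSdef]
      exact Finset.sum_congr rfl fun t _ => by rw [aa, Complex.norm_conj]
    have hU : U ≤ (N:ℝ)^2 * K * S^2 := by
      have h := Step4.L4 N (aa N f) hN
      rw [haa] at h
      exact h
    have hHolder : S ≤ (N:ℝ)⁻¹ * (T ^ ((3:ℝ)/4) * U ^ ((1:ℝ)/4)) := S_le_holder N f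
    have hB : ((N:ℝ)^2 * K * S^2) ^ ((1:ℝ)/4)
        = (N:ℝ) ^ ((1:ℝ)/2) * K ^ ((1:ℝ)/4) * S ^ ((1:ℝ)/2) := by
      rw [Real.mul_rpow (by positivity) (by positivity),
        Real.mul_rpow (by positivity) (by positivity)]
      congr 1
      · congr 1
        rw [← Real.rpow_natCast (N:ℝ) 2, ← Real.rpow_mul hNpos.le]
        norm_num
      · rw [← Real.rpow_natCast S 2, ← Real.rpow_mul hS0]
        norm_num
    set C := (N:ℝ)⁻¹ * (N:ℝ) ^ ((1:ℝ)/2) * K ^ ((1:ℝ)/4) * T ^ ((3:ℝ)/4) with hCdef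
    have hchain : S ≤ C * S ^ ((1:ℝ)/2) := by
      calc S ≤ (N:ℝ)⁻¹ * (T ^ ((3:ℝ)/4) * U ^ ((1:ℝ)/4)) := hHolder
        _ ≤ (N:ℝ)⁻¹ * (T ^ ((3:ℝ)/4) * ((N:ℝ)^2 * K * S^2) ^ ((1:ℝ)/4)) := by
            refine mul_le_mul_of_nonneg_left (mul_le_mul_of_nonneg_left ?_ (by positivity))
              (by positivity)
            exact Real.rpow_le_rpow hU0 hU (by norm_num)
        _ = C * S ^ ((1:ℝ)/2) := by
            rw [hB, hCdef]
            ring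
    have hSp : 0 < S ^ ((1:ℝ)/2) := Real.rpow_pos_of_pos hSpos _
    have h2 : S = S ^ ((1:ℝ)/2) * S ^ ((1:ℝ)/2) := by
      rw [← Real.rpow_add hSpos]
      norm_num
    have h3 : S ^ ((1:ℝ)/2) * S ^ ((1:ℝ)/2) ≤ C * S ^ ((1:ℝ)/2) := by
      rw [← h2]
      exact hchain
    have h4 : S ^ ((1:ℝ)/2) ≤ C := le_of_mul_le_mul_right h3 hSp
    have hNN : ((N:ℝ)⁻¹) ^ ((1:ℝ)/2) * (N:ℝ) ^ ((1:ℝ)/2) = 1 := by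
      rw [← Real.mul_rpow (by positivity) hNpos.le, inv_mul_cancel₀ hNpos.ne', Real.one_rpow]
    calc ((N:ℝ)⁻¹ * S) ^ ((1:ℝ)/2)
        = ((N:ℝ)⁻¹) ^ ((1:ℝ)/2) * S ^ ((1:ℝ)/2) := by
          rw [Real.mul_rpow (by positivity) hS0]
      _ ≤ ((N:ℝ)⁻¹) ^ ((1:ℝ)/2) * C := by
          refine mul_le_mul_of_nonneg_left h4 (by positivity)
      _ = (((N:ℝ)⁻¹) ^ ((1:ℝ)/2) * (N:ℝ) ^ ((1:ℝ)/2)) * ((N:ℝ)⁻¹ * (K ^ ((1:ℝ)/4) * T ^ ((3:ℝ)/4))) := by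
          rw [hCdef]
          ring
      _ = (N:ℝ)⁻¹ * (K ^ ((1:ℝ)/4) * T ^ ((3:ℝ)/4)) := by
          rw [hNN, one_mul]
      _ = (2 : ℝ) ^ ((ω : ℝ) / 4) * (N : ℝ)⁻¹ * T ^ ((3:ℝ)/4) := by
          rw [hKq]
          ring
end

section
/- Let N be a squarefree positive integer and let Σ = {(t, t²) : t ∈ ℤ/Nℤ} be the parabola in (ℤ/Nℤ)². Then for every subset U ⊆ Σ, the additive energy satisfies E(U) ≤ 2^{ω(N)} · |U|², where ω(N) is the number of distinct prime divisors of N. -/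
open scoped BigOperators

lemma rootBound : ∀ (N : ℕ) [NeZero N], Squarefree N → ∀ (c d : ZMod N),
    (Finset.univ.filter (fun x : ZMod N =>
        2 * (x - c) * (x - d) = 0)).card ≤ 2 ^ N.primeFactors.card := by
  intro N
  induction N using Nat.strong_induction_on with
  | _ N ih =>
  intro hNZ hsq c d
  have hN0 : N ≠ 0 := hNZ.out
  rcases eq_or_ne N 1 with h1 | h1
  · subst h1
    simpa using Finset.card_filter_le (Finset.univ : Finset (ZMod 1))
      (fun x => 2 * (x - c) * (x - d) = 0)
  · set p := N.minFac with hpdef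
    have hp : p.Prime := Nat.minFac_prime h1
    haveI := Fact.mk hp
    set m := N / p with hmdef
    have hpm : N = p * m := (Nat.mul_div_cancel' N.minFac_dvd).symm
    have hm0 : m ≠ 0 := by
      intro h; rw [h, mul_zero] at hpm; exact hN0 hpm
    haveI : NeZero m := ⟨hm0⟩
    have hsq' : Squarefree (p * m) := hpm ▸ hsq
    have hco : Nat.Coprime p m := (Nat.squarefree_mul_iff.mp hsq').1
    have hsqm : Squarefree m := (Nat.squarefree_mul_iff.mp hsq').2.2
    have hmlt : m < N := by
      rw [hpm]
      exact lt_mul_of_one_lt_left (Nat.pos_of_ne_zero hm0) hp.one_lt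
    have e : ZMod N ≃+* ZMod p × ZMod m := by
      rw [hpm]; exact ZMod.chineseRemainder hco
    -- transport count
    have hcard : (Finset.univ.filter (fun x : ZMod N =>
        2 * (x - c) * (x - d) = 0)).card
        = (Finset.univ.filter (fun y : ZMod p × ZMod m =>
        2 * (y - e c) * (y - e d) = 0)).card := by
      apply Finset.card_bij (fun x _ => e x)
      · intro x hx
        simp only [Finset.mem_filter, Finset.mem_univ, true_and] at *
        have := congrArg e hx
        simpa [map_mul, map_sub, map_ofNat] using this
      · intro x _ y _ h
        exact e.injective h
      · intro y hy
        refine ⟨e.symm y, ?_, by simp⟩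
        simp only [Finset.mem_filter, Finset.mem_univ, true_and] at *
        apply e.injective
        simpa [map_mul, map_sub, map_ofNat] using hy
    -- split product
    have hsplit : (Finset.univ.filter (fun y : ZMod p × ZMod m =>
        2 * (y - e c) * (y - e d) = 0))
        = (Finset.univ.filter (fun y : ZMod p =>
            2 * (y - (e c).1) * (y - (e d).1) = 0)) ×ˢ
          (Finset.univ.filter (fun y : ZMod m =>
            2 * (y - (e c).2) * (y - (e d).2) = 0)) := by
      ext y
      simp [Finset.mem_product, Prod.ext_iff]
    -- bound on prime side
    have hpbound : (Finset.univ.filter (fun y : ZMod p =>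
        2 * (y - (e c).1) * (y - (e d).1) = 0)).card ≤ 2 := by
      rcases eq_or_ne (2 : ZMod p) 0 with h2 | h2
      · calc (Finset.univ.filter _).card ≤ Fintype.card (ZMod p) :=
              Finset.card_filter_le _ _
          _ = p := ZMod.card p
          _ = 2 := by
              have : (p : ℕ) ∣ 2 := by
                have := (ZMod.natCast_eq_zero_iff 2 p).mp (by exact_mod_cast h2)
                exact this
              exact (Nat.prime_dvd_prime_iff_eq hp Nat.prime_two).mp this
      · apply le_trans (Finset.card_le_card (s := _) (t := {(e c).1, (e d).1}) ?_)
        · exact Finset.card_insert_le _ _ |>.trans (by simp)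
        · intro y hy
          simp only [Finset.mem_filter, Finset.mem_univ, true_and] at hy
          rcases mul_eq_zero.mp hy with h | h
          · rcases mul_eq_zero.mp h with h | h
            · exact absurd h h2
            · simp [sub_eq_zero.mp h]
          · simp [sub_eq_zero.mp h]
    have hmbound := ih m hmlt hsqm (e c).2 (e d).2
    have hfac : N.primeFactors.card = 1 + m.primeFactors.card := by
      rw [hpm, Nat.primeFactors_mul hp.ne_zero hm0, hp.primeFactors]
      rw [Finset.card_union_of_disjoint]
      · simp
      · simpa using (Nat.Prime.coprime_iff_not_dvd hp).mp hco ∘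
          fun h => Nat.dvd_of_mem_primeFactors h
    rw [hcard, hsplit, Finset.card_product, hfac, pow_add, pow_one]
    exact Nat.mul_le_mul hpbound hmbound

theorem additive_energy_parabola (N : ℕ) [NeZero N] (hN : Squarefree N)
    (U : Finset (ZMod N × ZMod N)) (hU : U ⊆ parabola N) :
    (((U ×ˢ U) ×ˢ (U ×ˢ U)).filter
        (fun p => p.1.1 + p.1.2 = p.2.1 + p.2.2)).card ≤
      2 ^ N.primeFactors.card * U.card ^ 2 := by
  classical
  set T := ((U ×ˢ U) ×ˢ (U ×ˢ U)).filter
      (fun p => p.1.1 + p.1.2 = p.2.1 + p.2.2) with hT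
  have hpar : ∀ P ∈ U, P = (P.1, P.1 ^ 2) := by
    intro P hP
    have := hU hP
    simp only [parabola, Finset.mem_image, Finset.mem_univ, true_and] at this
    obtain ⟨t, ht⟩ := this
    rw [← ht]
  have hmem : ∀ p ∈ T, p.2 ∈ U ×ˢ U := by
    intro q hq
    exact (Finset.mem_product.mp (Finset.mem_filter.mp hq).1).2
  rw [Finset.card_eq_sum_card_fiberwise hmem]
  have hbound : ∀ q ∈ U ×ˢ U,
      (T.filter (fun p => p.2 = q)).card ≤ 2 ^ N.primeFactors.card := by
    intro q hq
    obtain ⟨hq1, hq2⟩ := Finset.mem_product.mp hq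
    set c := q.1.1 with hcdef
    set d := q.2.1 with hddef
    have hc : q.1 = (c, c ^ 2) := hpar _ hq1
    have hd : q.2 = (d, d ^ 2) := hpar _ hq2
    refine le_trans (Finset.card_le_card_of_injOn (fun p => p.1.1.1) ?_ ?_)
      (rootBound N hN c d)
    · intro p hp
      simp only [Finset.mem_coe, Finset.mem_filter, Finset.mem_univ, true_and] at hp ⊢
      obtain ⟨hpT, hpq⟩ := hp
      obtain ⟨hpmem, heq⟩ := Finset.mem_filter.mp hpT
      obtain ⟨hpmem1, _⟩ := Finset.mem_product.mp hpmem
      obtain ⟨hP, hQ⟩ := Finset.mem_product.mp hpmem1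
      have hPeq := hpar _ hP
      have hQeq := hpar _ hQ
      set a := p.1.1.1
      set b := p.1.2.1
      rw [hpq, hc, hd] at heq
      rw [hPeq, hQeq] at heq
      have h1 : a + b = c + d := congrArg Prod.fst heq
      have h2 : a ^ 2 + b ^ 2 = c ^ 2 + d ^ 2 := congrArg Prod.snd heq
      have hb : b = c + d - a := by linear_combination h1
      rw [hb] at h2
      linear_combination h2
    · intro p hp p' hp' hfst
      simp only [Finset.mem_coe, Finset.mem_filter] at hp hp'
      obtain ⟨hpT, hpq⟩ := hp
      obtain ⟨hpT', hpq'⟩ := hp'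
      obtain ⟨hpmem, heq⟩ := Finset.mem_filter.mp hpT
      obtain ⟨hpmem', heq'⟩ := Finset.mem_filter.mp hpT'
      obtain ⟨hpmem1, _⟩ := Finset.mem_product.mp hpmem
      obtain ⟨hP, hQ⟩ := Finset.mem_product.mp hpmem1
      obtain ⟨hpmem1', _⟩ := Finset.mem_product.mp hpmem'
      obtain ⟨hP', hQ'⟩ := Finset.mem_product.mp hpmem1'
      have h11 : p.1.1 = p'.1.1 := by
        rw [hpar _ hP, hpar _ hP']
        simp only at hfst
        rw [hfst]
      have h12 : p.1.2 = p'.1.2 := by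
        have e1 : p.1.1 + p.1.2 = p.2.1 + p.2.2 := heq
        have e2 : p'.1.1 + p'.1.2 = p'.2.1 + p'.2.2 := heq'
        rw [hpq] at e1
        rw [hpq'] at e2
        have : p.1.1 + p.1.2 = p'.1.1 + p'.1.2 := by rw [e1, e2]
        rw [h11] at this
        exact add_left_cancel this
      have h2 : p.2 = p'.2 := by rw [hpq, hpq']
      exact Prod.ext (Prod.ext h11 h12) h2
  calc ∑ q ∈ U ×ˢ U, (T.filter (fun p => p.2 = q)).card
      ≤ ∑ _q ∈ U ×ˢ U, 2 ^ N.primeFactors.card := Finset.sum_le_sum hbound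
    _ = (U ×ˢ U).card * 2 ^ N.primeFactors.card := by
        rw [Finset.sum_const, smul_eq_mul]
    _ = 2 ^ N.primeFactors.card * U.card ^ 2 := by
        rw [Finset.card_product]; ring
end

section
/- Let N be a squarefree positive integer, let Σ = {(t, t²) : t ∈ ℤ/Nℤ} be the parabola in (ℤ/Nℤ)², and let k ∈ (ℤ/Nℤ)². Then the number of pairs (x', y') ∈ Σ × Σ with x' + y' = k is at most 2^{ω(N)}, where ω(N) is the number of distinct prime divisors of N. -/
open scoped BigOperators

open Polynomial in

lemma key_prime (p : ℕ) [NeZero p] (hp : p.Prime) (a b : ZMod p) :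
    (Finset.univ.filter fun t : ZMod p => t ^ 2 + (a - t) ^ 2 = b).card ≤ 2 := by
  haveI := Fact.mk hp
  by_cases h2 : p = 2
  · subst h2
    calc (Finset.univ.filter fun t : ZMod 2 => t ^ 2 + (a - t) ^ 2 = b).card
        ≤ (Finset.univ : Finset (ZMod 2)).card := Finset.card_le_card (Finset.filter_subset _ _)
      _ = 2 := by simp
  · have h2' : (2 : ZMod p) ≠ 0 := by
      intro h
      have hd : (p : ℕ) ∣ 2 := (ZMod.natCast_eq_zero_iff 2 p).1 (by exact_mod_cast h)
      have h1 := hp.two_le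
      have h2le := Nat.le_of_dvd (by norm_num) hd
      interval_cases p <;> simp_all
    set f : (ZMod p)[X] := C 2 * X ^ 2 + C (-2 * a) * X + C (a ^ 2 - b) with hf
    have hdeg : f.natDegree = 2 := Polynomial.natDegree_quadratic h2'
    have hf0 : f ≠ 0 := fun h => by simp [h] at hdeg
    have hsub : (Finset.univ.filter fun t : ZMod p => t ^ 2 + (a - t) ^ 2 = b)
        ⊆ f.roots.toFinset := by
      intro t ht
      simp only [Finset.mem_filter, Finset.mem_univ, true_and] at ht
      rw [Multiset.mem_toFinset, Polynomial.mem_roots hf0]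
      simp only [Polynomial.IsRoot, hf, Polynomial.eval_add, Polynomial.eval_mul,
        Polynomial.eval_pow, Polynomial.eval_C, Polynomial.eval_X]
      linear_combination ht
    calc _ ≤ f.roots.toFinset.card := Finset.card_le_card hsub
      _ ≤ Multiset.card f.roots := f.roots.toFinset_card_le
      _ ≤ f.natDegree := Polynomial.card_roots' f
      _ = 2 := hdeg

lemma crt_inj (p m : ℕ) [NeZero p] [NeZero m] (hco : Nat.Coprime p m) :
    Function.Injective
      ((ZMod.castHom (dvd_mul_right p m) (ZMod p)).prod
       (ZMod.castHom (dvd_mul_left m p) (ZMod m))) := by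
  haveI : NeZero (p * m) := ⟨mul_ne_zero (NeZero.ne p) (NeZero.ne m)⟩
  rw [injective_iff_map_eq_zero]
  intro x hx
  simp only [RingHom.prod_apply, Prod.mk_eq_zero] at hx
  obtain ⟨h1, h2⟩ := hx
  rw [ZMod.castHom_apply, ← ZMod.natCast_val, ZMod.natCast_eq_zero_iff] at h1 h2
  have hdvd : p * m ∣ x.val := Nat.Coprime.mul_dvd_of_dvd_of_dvd hco h1 h2
  exact (ZMod.val_eq_zero x).1 (Nat.eq_zero_of_dvd_of_lt hdvd (ZMod.val_lt x))

lemma key : ∀ N : ℕ, Squarefree N → ∀ [NeZero N], ∀ a b : ZMod N,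
    (Finset.univ.filter fun t : ZMod N => t ^ 2 + (a - t) ^ 2 = b).card
      ≤ 2 ^ N.primeFactors.card := by
  intro N
  induction N using Nat.strong_induction_on with
  | _ N ih =>
    intro hN _ a b
    rcases eq_or_ne N 1 with rfl | hN1
    · simpa using Finset.card_le_card (Finset.filter_subset _ (Finset.univ : Finset (ZMod 1)))
    by_cases hNp : N.Prime
    · calc _ ≤ 2 := key_prime N hNp a b
        _ ≤ 2 ^ N.primeFactors.card := by rw [hNp.primeFactors]; simp
    · obtain ⟨p, hp, hpd⟩ : ∃ p, p.Prime ∧ p ∣ N := ⟨N.minFac, Nat.minFac_prime hN1, N.minFac_dvd⟩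
      obtain ⟨m, rfl⟩ := hpd
      have hm0 : m ≠ 0 := fun h => hN.ne_zero (by simp [h])
      haveI : NeZero p := ⟨hp.ne_zero⟩
      haveI : NeZero m := ⟨hm0⟩
      have hpm : ¬ p ∣ m := by
        intro hd
        obtain ⟨c, hc⟩ := hd
        exact hp.not_isUnit (hN p (⟨c, by rw [hc]; ring⟩))
      have hco : Nat.Coprime p m := (Nat.Prime.coprime_iff_not_dvd hp).2 hpm
      have hm1 : m ≠ 1 := fun h => hNp (by rw [h, mul_one]; exact hp)
      -- composite case
      have hsm : Squarefree m := hN.squarefree_of_dvd (dvd_mul_left m p)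
      have hsp : Squarefree p := hp.squarefree
      have h2p := hp.two_le
      have h2m : 2 ≤ m := by omega
      have hmlt : m < p * m := by nlinarith
      have hplt : p < p * m := by nlinarith
      have ihp := ih p hplt hsp (ZMod.castHom (dvd_mul_right p m) (ZMod p) a)
        (ZMod.castHom (dvd_mul_right p m) (ZMod p) b)
      have ihm := ih m hmlt hsm (ZMod.castHom (dvd_mul_left m p) (ZMod m) a)
        (ZMod.castHom (dvd_mul_left m p) (ZMod m) b)
      set fp := ZMod.castHom (dvd_mul_right p m) (ZMod p)
      set fm := ZMod.castHom (dvd_mul_left m p) (ZMod m)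
      have hinj := crt_inj p m hco
      have hcard : (Finset.univ.filter fun t : ZMod (p * m) => t ^ 2 + (a - t) ^ 2 = b).card
          ≤ ((Finset.univ.filter fun t : ZMod p => t ^ 2 + (fp a - t) ^ 2 = fp b)
            ×ˢ (Finset.univ.filter fun t : ZMod m => t ^ 2 + (fm a - t) ^ 2 = fm b)).card := by
        apply Finset.card_le_card_of_injOn (fun t => (fp t, fm t))
        · intro t ht
          simp only [Finset.mem_coe, Finset.mem_filter, Finset.mem_univ, true_and] at ht
          simp only [Finset.mem_coe, Finset.mem_product, Finset.mem_filter, Finset.mem_univ, true_and]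
          constructor
          · have := congrArg fp ht
            simpa [map_add, map_pow, map_sub] using this
          · have := congrArg fm ht
            simpa [map_add, map_pow, map_sub] using this
        · intro x _ y _ hxy
          exact hinj (by simpa [RingHom.prod_apply, fp, fm] using hxy)
      have hfac : (p * m).primeFactors.card = p.primeFactors.card + m.primeFactors.card := by
        rw [Nat.Coprime.primeFactors_mul hco, Finset.card_union_of_disjoint]
        exact Nat.Coprime.disjoint_primeFactors hco
      calc _ ≤ _ := hcard
        _ = _ * _ := Finset.card_product _ _
        _ ≤ 2 ^ p.primeFactors.card * 2 ^ m.primeFactors.card := Nat.mul_le_mul ihp ihm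
        _ = 2 ^ (p * m).primeFactors.card := by rw [hfac, pow_add]

theorem parabola_sum_representations (N : ℕ) [NeZero N] (hN : Squarefree N)
    (k : ZMod N × ZMod N) :
    (((parabola N) ×ˢ (parabola N)).filter (fun p => p.1 + p.2 = k)).card ≤
      2 ^ N.primeFactors.card := by
  refine le_trans ?_ (key N hN k.1 k.2)
  apply Finset.card_le_card_of_injOn (fun q => q.1.1)
  · intro q hq
    simp only [Finset.mem_coe, Finset.mem_filter, Finset.mem_product, parabola, Finset.mem_image,
      Finset.mem_univ, true_and] at hq
    obtain ⟨⟨⟨t, ht⟩, ⟨u, hu⟩⟩, hsum⟩ := hq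
    simp only [Finset.mem_coe, Finset.mem_filter, Finset.mem_univ, true_and]
    have h1 : q.1 = (t, t ^ 2) := ht.symm
    have h2 : q.2 = (u, u ^ 2) := hu.symm
    rw [h1, h2] at hsum
    have hfst : t + u = k.1 := congrArg Prod.fst hsum
    have hsnd : t ^ 2 + u ^ 2 = k.2 := congrArg Prod.snd hsum
    have : q.1.1 = t := by rw [h1]
    rw [this, ← hfst, ← hsnd]
    ring
  · intro x hx y hy hxy
    simp only [Finset.mem_coe, Finset.mem_filter, Finset.mem_product, parabola, Finset.mem_image,
      Finset.mem_univ, true_and] at hx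
    simp only [Finset.mem_coe, Finset.mem_filter, Finset.mem_product, parabola, Finset.mem_image,
      Finset.mem_univ, true_and] at hy
    obtain ⟨⟨⟨t, ht⟩, -⟩, hsx⟩ := hx
    obtain ⟨⟨⟨s, hs⟩, -⟩, hsy⟩ := hy
    have h1 : x.1 = y.1 := by
      simp only at hxy
      rw [← ht, ← hs]
      rw [← ht, ← hs] at hxy
      simp only at hxy
      rw [hxy]
    have h2 : x.2 = y.2 := by
      have : x.2 = k - x.1 := by rw [← hsx]; abel
      have h2' : y.2 = k - y.1 := by rw [← hsy]; abel
      rw [this, h2', h1]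
    exact Prod.ext h1 h2
end

section
/- Let K be a positive integer and let N be a squarefree positive integer having at most K distinct prime divisors. Let Σ = {(t, t²) : t ∈ ℤ/Nℤ} be the parabola in (ℤ/Nℤ)². Then for every function f : (ℤ/Nℤ)² → ℂ, ( (1/|Σ|) · Σ_{m∈Σ} |f̂(m)|² )^{1/2} ≤ 2^{K/4} · N^{-1} · ( Σ_{x∈(ℤ/Nℤ)²} |f(x)|^{4/3} )^{3/4}. -/
open scoped BigOperators

/-! ### Auxiliary definitions and lemmas -/

noncomputable def chr (N : ℕ) [NeZero N] (a : ZMod N) : ℂ := ZMod.stdAddChar a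

section chrlemmas
variable {N : ℕ} [NeZero N]

lemma chr_add (a b : ZMod N) : chr N (a + b) = chr N a * chr N b := by
  simp [chr, AddChar.map_add_eq_mul]

lemma chr_conj (a : ZMod N) : (starRingEnd ℂ) (chr N a) = chr N (-a) := by
  have h1 : chr N a * chr N (-a) = 1 := by
    rw [← chr_add]; simp [chr]
  have habs : ‖chr N a‖ = 1 := by
    simp [chr, ZMod.stdAddChar_apply, Circle.norm_coe]
  have hmc : (starRingEnd ℂ) (chr N a) * (chr N a * chr N (-a)) = (starRingEnd ℂ) (chr N a) := by
    rw [h1, mul_one]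
  have h2 : (starRingEnd ℂ) (chr N a) * chr N a = 1 := by
    rw [mul_comm, Complex.mul_conj, Complex.normSq_eq_norm_sq, habs]; norm_num
  calc (starRingEnd ℂ) (chr N a) = (starRingEnd ℂ) (chr N a) * chr N a * chr N (-a) := by
        rw [mul_assoc, hmc]
    _ = chr N (-a) := by rw [h2, one_mul]

lemma chr_neg_val (a : ZMod N) :
    Complex.exp (-2 * Real.pi * Complex.I * ((a.val : ℕ) : ℂ) / (N : ℂ)) = chr N (-a) := by
  have := ZMod.stdAddChar_coe (N := N) (-(a.val : ℤ))
  rw [show ((-(a.val : ℤ) : ℤ) : ZMod N) = -a by push_cast [ZMod.natCast_val]; simp] at this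
  rw [chr, this]
  push_cast
  ring_nf

lemma chr_sum_mul (c : ZMod N) :
    ∑ x : ZMod N, chr N (x * c) = if c = 0 then (N : ℂ) else 0 := by
  classical
  have := AddChar.sum_mulShift (R := ZMod N) (R' := ℂ) c (ZMod.isPrimitive_stdAddChar N)
  simpa [chr, ZMod.card] using this

lemma chr_sum2 (c : ZMod N × ZMod N) :
    ∑ x : ZMod N × ZMod N, chr N (x.1 * c.1 + x.2 * c.2) = if c = 0 then ((N : ℂ))^2 else 0 := by
  classical
  rw [Fintype.sum_prod_type]
  have h0 : ∀ x1 : ZMod N, ∑ x2 : ZMod N, chr N (x1 * c.1 + x2 * c.2)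
      = chr N (x1 * c.1) * ∑ x2 : ZMod N, chr N (x2 * c.2) := by
    intro x1; rw [Finset.mul_sum]; exact Finset.sum_congr rfl fun x2 _ => chr_add _ _
  simp_rw [h0]
  rw [← Finset.sum_mul, chr_sum_mul, chr_sum_mul]
  rcases eq_or_ne c 0 with h | h
  · simp [h, sq]
  · rw [if_neg h]
    rcases eq_or_ne c.1 0 with h1 | h1
    · have h2 : c.2 ≠ 0 := fun h2 => h (Prod.ext h1 h2)
      simp [h2]
    · simp [h1]

lemma parseval_ext (h : ZMod N × ZMod N → ℂ) :
    ∑ x : ZMod N × ZMod N,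
      (∑ c : ZMod N × ZMod N, h c * chr N (-(x.1 * c.1 + x.2 * c.2))) *
        (starRingEnd ℂ) (∑ c : ZMod N × ZMod N, h c * chr N (-(x.1 * c.1 + x.2 * c.2)))
      = (N : ℂ)^2 * ∑ c : ZMod N × ZMod N, h c * (starRingEnd ℂ) (h c) := by
  classical
  have key : ∀ x : ZMod N × ZMod N,
      (∑ c : ZMod N × ZMod N, h c * chr N (-(x.1 * c.1 + x.2 * c.2))) *
        (starRingEnd ℂ) (∑ c : ZMod N × ZMod N, h c * chr N (-(x.1 * c.1 + x.2 * c.2)))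
      = ∑ c : ZMod N × ZMod N, ∑ d : ZMod N × ZMod N,
          (h c * (starRingEnd ℂ) (h d)) * chr N (x.1 * (d.1 - c.1) + x.2 * (d.2 - c.2)) := by
    intro x
    rw [map_sum, Finset.sum_mul_sum]
    refine Finset.sum_congr rfl fun c _ => Finset.sum_congr rfl fun d _ => ?_
    rw [map_mul, chr_conj, neg_neg]
    have hch : chr N (-(x.1 * c.1 + x.2 * c.2)) * chr N (x.1 * d.1 + x.2 * d.2)
        = chr N (x.1 * (d.1 - c.1) + x.2 * (d.2 - c.2)) := by
      rw [← chr_add]; congr 1; ring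
    calc h c * chr N (-(x.1 * c.1 + x.2 * c.2)) * ((starRingEnd ℂ) (h d) * chr N (x.1 * d.1 + x.2 * d.2))
        = (h c * (starRingEnd ℂ) (h d)) * (chr N (-(x.1 * c.1 + x.2 * c.2)) * chr N (x.1 * d.1 + x.2 * d.2)) := by ring
      _ = (h c * (starRingEnd ℂ) (h d)) * chr N (x.1 * (d.1 - c.1) + x.2 * (d.2 - c.2)) := by rw [hch]
  simp_rw [key]
  have swap : ∑ x : ZMod N × ZMod N, ∑ c : ZMod N × ZMod N, ∑ d : ZMod N × ZMod N,
      (h c * (starRingEnd ℂ) (h d)) * chr N (x.1 * (d.1 - c.1) + x.2 * (d.2 - c.2))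
      = ∑ c : ZMod N × ZMod N, ∑ d : ZMod N × ZMod N,
        (h c * (starRingEnd ℂ) (h d)) * ∑ x : ZMod N × ZMod N, chr N (x.1 * (d.1 - c.1) + x.2 * (d.2 - c.2)) := by
    rw [Finset.sum_comm]
    refine Finset.sum_congr rfl fun c _ => ?_
    rw [Finset.sum_comm]
    refine Finset.sum_congr rfl fun d _ => ?_
    rw [← Finset.mul_sum]
  rw [swap]
  have horth : ∀ c d : ZMod N × ZMod N,
      ∑ x : ZMod N × ZMod N, chr N (x.1 * (d.1 - c.1) + x.2 * (d.2 - c.2))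
      = if d = c then ((N : ℂ))^2 else 0 := by
    intro c d
    have := chr_sum2 (N := N) (d.1 - c.1, d.2 - c.2)
    simp only at this
    rw [this]
    congr 1
    simp [Prod.ext_iff, sub_eq_zero]
  simp_rw [horth]
  rw [Finset.mul_sum]
  refine Finset.sum_congr rfl fun c _ => ?_
  rw [Finset.sum_eq_single c]
  · rw [if_pos rfl]; ring
  · intro d _ hd; rw [if_neg hd, mul_zero]
  · intro hc; exact absurd (Finset.mem_univ c) hc

end chrlemmas

def solset (N : ℕ) [NeZero N] (s u : ZMod N) : Finset (ZMod N) :=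
  Finset.univ.filter (fun t => t ^ 2 + (s - t) ^ 2 = u)

lemma solset_card_prime (p : ℕ) (hp : p.Prime) (s u : ZMod p) :
    haveI : NeZero p := ⟨hp.ne_zero⟩
    (solset p s u).card ≤ 2 := by
  haveI : NeZero p := ⟨hp.ne_zero⟩
  haveI : Fact p.Prime := ⟨hp⟩
  rcases eq_or_ne p 2 with h2 | h2
  · subst h2
    calc (solset 2 s u).card ≤ Finset.univ.card := Finset.card_le_card (Finset.filter_subset _ _)
      _ = 2 := by simp
  · have h2ne : (2 : ZMod p) ≠ 0 := by
      intro h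
      have hdvd : (p : ℕ) ∣ 2 := by
        have := (ZMod.natCast_eq_zero_iff 2 p).mp (by exact_mod_cast h)
        exact this
      exact h2 ((Nat.prime_dvd_prime_iff_eq hp Nat.prime_two).mp hdvd)
    set P : Polynomial (ZMod p) :=
      Polynomial.C 2 * Polynomial.X ^ 2 + Polynomial.C (-2 * s) * Polynomial.X
        + Polynomial.C (s ^ 2 - u) with hP
    have hdegP : P.degree = 2 := Polynomial.degree_quadratic h2ne
    have hPne : P ≠ 0 := fun h => by simp [h] at hdegP
    have hdeg : P.natDegree ≤ 2 := Polynomial.natDegree_quadratic_le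
    have hsub : solset p s u ⊆ P.roots.toFinset := by
      intro t ht
      simp only [solset, Finset.mem_filter, Finset.mem_univ, true_and] at ht
      rw [Multiset.mem_toFinset, Polynomial.mem_roots hPne]
      show Polynomial.IsRoot P t
      simp only [Polynomial.IsRoot, hP, Polynomial.eval_add, Polynomial.eval_mul,
        Polynomial.eval_C, Polynomial.eval_pow, Polynomial.eval_X]
      have h0 : t ^ 2 + (s - t) ^ 2 - u = 0 := by rw [ht]; ring
      calc 2 * t ^ 2 + -2 * s * t + (s ^ 2 - u) = t ^ 2 + (s - t) ^ 2 - u := by ring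
        _ = 0 := h0
    calc (solset p s u).card ≤ P.roots.toFinset.card := Finset.card_le_card hsub
      _ ≤ Multiset.card P.roots := Multiset.toFinset_card_le _
      _ ≤ P.natDegree := Polynomial.card_roots' P
      _ ≤ 2 := hdeg

lemma solset_card_le : ∀ N : ℕ, Squarefree N → ∀ (_ : NeZero N) (s u : ZMod N),
    (solset N s u).card ≤ 2 ^ N.primeFactors.card := by
  intro N
  induction N using Nat.strong_induction_on with
  | _ N ih =>
    intro hsq hNe s u
    rcases eq_or_ne N 1 with h1 | h1
    · subst h1
      calc (solset 1 s u).card ≤ (Finset.univ : Finset (ZMod 1)).card :=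
            Finset.card_le_card (Finset.filter_subset _ _)
        _ ≤ 2 ^ (Nat.primeFactors 1).card := by simp
    · have hN0 : N ≠ 0 := hNe.out
      have hp : N.minFac.Prime := Nat.minFac_prime h1
      obtain ⟨M, hM⟩ := Nat.minFac_dvd N
      revert hp hM
      generalize N.minFac = p
      intro hp hM
      subst hM
      have hM0 : M ≠ 0 := fun h => hN0 (by rw [h, mul_zero])
      haveI : NeZero p := ⟨hp.ne_zero⟩
      haveI : NeZero M := ⟨hM0⟩
      have hpM : ¬ p ∣ M := by
        intro hdvd
        obtain ⟨c, hc⟩ := hdvd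
        have : p * p ∣ p * M := ⟨c, by rw [hc]; ring⟩
        exact hp.not_isUnit (hsq p this)
      have hcop : Nat.Coprime p M := (Nat.Prime.coprime_iff_not_dvd hp).mpr hpM
      have hsqM : Squarefree M := hsq.squarefree_of_dvd ⟨p, mul_comm p M⟩
      have hMlt : M < p * M :=
        lt_mul_left (Nat.pos_of_ne_zero hM0) hp.one_lt
      let e := ZMod.chineseRemainder hcop
      have hcard : (solset (p * M) s u).card ≤
          ((solset p (e s).1 (e u).1) ×ˢ (solset M (e s).2 (e u).2)).card := by
        apply Finset.card_le_card_of_injOn (fun t => e t)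
        · intro t ht
          simp only [Finset.mem_coe, solset, Finset.mem_filter, Finset.mem_univ, true_and] at ht
          have h' : e (t ^ 2 + (s - t) ^ 2) = e u := congrArg e ht
          simp only [map_add, map_sub, pow_two, map_mul, Prod.ext_iff, Prod.fst_add,
            Prod.snd_add, Prod.fst_sub, Prod.snd_sub, Prod.fst_mul, Prod.snd_mul] at h'
          simp only [Finset.mem_coe, Finset.mem_product, solset, Finset.mem_filter, Finset.mem_univ, true_and,
            pow_two]
          exact ⟨h'.1, h'.2⟩
        · intro a _ b _ hab
          exact e.injective hab
      have hcard2 : ((solset p (e s).1 (e u).1) ×ˢ (solset M (e s).2 (e u).2)).card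
          ≤ 2 * 2 ^ M.primeFactors.card := by
        rw [Finset.card_product]
        exact Nat.mul_le_mul (solset_card_prime p hp _ _)
          (ih M hMlt hsqM ⟨hM0⟩ (e s).2 (e u).2)
      have hω : (p * M).primeFactors.card = 1 + M.primeFactors.card := by
        rw [Nat.primeFactors_mul hp.ne_zero hM0, hp.primeFactors]
        rw [Finset.card_union_of_disjoint]
        · simp
        · rw [Finset.disjoint_singleton_left]
          intro hmem
          exact hpM (Nat.dvd_of_mem_primeFactors hmem)
      calc (solset (p * M) s u).card ≤ 2 * 2 ^ M.primeFactors.card := hcard.trans hcard2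
        _ = 2 ^ (p * M).primeFactors.card := by rw [hω, pow_add, pow_one]

lemma sum_solset_eq {N : ℕ} [NeZero N] {M : Type*} [AddCommMonoid M] (φ : ZMod N → ZMod N → M) :
    ∑ c : ZMod N × ZMod N, ∑ t ∈ solset N c.1 c.2, φ t (c.1 - t)
      = ∑ p : ZMod N × ZMod N, φ p.1 p.2 := by
  classical
  have base := Finset.sum_fiberwise (Finset.univ : Finset (ZMod N × ZMod N))
    (fun p => ((p.1 + p.2, p.1 ^ 2 + p.2 ^ 2) : ZMod N × ZMod N)) (fun p => φ p.1 p.2)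
  rw [← base]
  refine Finset.sum_congr rfl fun c _ => ?_
  refine Finset.sum_bij' (fun t _ => ((t, c.1 - t) : ZMod N × ZMod N)) (fun p _ => p.1)
    ?_ ?_ ?_ ?_ ?_
  · intro t ht
    simp only [solset, Finset.mem_filter, Finset.mem_univ, true_and] at ht
    simp only [Finset.mem_filter, Finset.mem_univ, true_and, Prod.ext_iff]
    exact ⟨by ring, by rw [← ht]⟩
  · intro p hp
    simp only [Finset.mem_filter, Finset.mem_univ, true_and, Prod.ext_iff] at hp
    simp only [solset, Finset.mem_filter, Finset.mem_univ, true_and]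
    obtain ⟨h1, h2⟩ := hp
    rw [← h1, ← h2]; ring
  · intro t _; rfl
  · intro p hp
    simp only [Finset.mem_filter, Finset.mem_univ, true_and, Prod.ext_iff] at hp
    obtain ⟨h1, _⟩ := hp
    ext
    · rfl
    · show c.1 - p.1 = p.2
      rw [← h1]; ring
  · intro t _; rfl

theorem restriction_bounded_factors (K : ℕ) (hK : 0 < K) (N : ℕ) [NeZero N]
    (hN : Squarefree N) (hω : N.primeFactors.card ≤ K)
    (f : ZMod N × ZMod N → ℂ) :
    (((parabola N).card : ℝ)⁻¹ *
        ∑ m ∈ parabola N, ‖dft N f m‖ ^ 2) ^ ((1 : ℝ) / 2) ≤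
      (2 : ℝ) ^ ((K : ℝ) / 4) * (N : ℝ)⁻¹ *
        (∑ x : ZMod N × ZMod N, ‖f x‖ ^ ((4 : ℝ) / 3)) ^ ((3 : ℝ) / 4) := by
  classical
  have hNpos : (0:ℝ) < (N:ℝ) := by
    exact_mod_cast Nat.pos_of_ne_zero (NeZero.ne N)
  have hNC : ((N:ℕ):ℂ) ≠ 0 := by exact_mod_cast (NeZero.ne N)
  set g : ZMod N → ℂ := fun t => (starRingEnd ℂ) (dft N f (t, t ^ 2)) with hg
  set T : ZMod N × ZMod N → ℂ :=
    fun x => ∑ t : ZMod N, g t * chr N (-(x.1 * t + x.2 * t ^ 2)) with hT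
  set F : ZMod N × ZMod N → ℂ :=
    fun c => ∑ t ∈ solset N c.1 c.2, g t * g (c.1 - t) with hF
  set S : ℝ := ∑ t : ZMod N, ‖dft N f (t, t ^ 2)‖ ^ 2 with hS
  set A : ℝ := (∑ x : ZMod N × ZMod N, ‖f x‖ ^ ((4 : ℝ) / 3)) ^ ((3 : ℝ) / 4) with hA
  have habs2 : ∀ z : ℂ, ((‖z‖ ^ 2 : ℝ) : ℂ) = z * (starRingEnd ℂ) z := by
    intro z
    rw [Complex.sq_norm, Complex.mul_conj]
  -- dft in terms of chr
  have h_dft : ∀ m : ZMod N × ZMod N, dft N f m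
      = (N : ℂ)⁻¹ * ∑ x : ZMod N × ZMod N, f x * chr N (-(x.1 * m.1 + x.2 * m.2)) := by
    intro m
    rw [dft]
    congr 1
    exact Finset.sum_congr rfl fun x _ => by rw [chr_neg_val]
  have hS0 : 0 ≤ S := Finset.sum_nonneg fun t _ => sq_nonneg _
  have hA0 : 0 ≤ A := Real.rpow_nonneg (Finset.sum_nonneg fun x _ =>
    Real.rpow_nonneg (norm_nonneg _) _) _
  -- parabola card and sum
  have hinj : Function.Injective (fun t : ZMod N => ((t, t ^ 2) : ZMod N × ZMod N)) := by
    intro a b hab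
    exact congrArg Prod.fst hab
  have h_card : ((parabola N).card : ℝ) = (N : ℝ) := by
    rw [parabola, Finset.card_image_of_injective _ hinj, Finset.card_univ, ZMod.card]
  have h_sum_par : ∑ m ∈ parabola N, ‖dft N f m‖ ^ 2 = S := by
    rw [parabola, Finset.sum_image (fun a _ b _ h => hinj h)]
  have hgabs : ∀ t : ZMod N, ‖g t‖ = ‖dft N f (t, t ^ 2)‖ := by
    intro t; rw [hg]; exact Complex.norm_conj _
  have hgsum : ∑ t : ZMod N, ‖g t‖ ^ 2 = S := by
    rw [hS]; exact Finset.sum_congr rfl fun t _ => by rw [hgabs]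
  -- square of the extension
  have hTsq : ∀ x : ZMod N × ZMod N,
      (T x) ^ 2 = ∑ c : ZMod N × ZMod N, F c * chr N (-(x.1 * c.1 + x.2 * c.2)) := by
    intro x
    have hrhs : ∑ c : ZMod N × ZMod N, F c * chr N (-(x.1 * c.1 + x.2 * c.2))
        = ∑ c : ZMod N × ZMod N, ∑ t ∈ solset N c.1 c.2,
            (fun t1 t2 => g t1 * g t2 *
              chr N (-(x.1 * (t1 + t2) + x.2 * (t1 ^ 2 + t2 ^ 2)))) t (c.1 - t) := by
      refine Finset.sum_congr rfl fun c _ => ?_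
      rw [hF, Finset.sum_mul]
      refine Finset.sum_congr rfl fun t ht => ?_
      simp only [solset, Finset.mem_filter, Finset.mem_univ, true_and] at ht
      simp only []
      congr 2
      rw [← ht]
      ring
    rw [hrhs, sum_solset_eq (N := N) (fun t1 t2 => g t1 * g t2 *
        chr N (-(x.1 * (t1 + t2) + x.2 * (t1 ^ 2 + t2 ^ 2))))]
    rw [sq, hT]
    simp only []
    rw [Finset.sum_mul_sum, Fintype.sum_prod_type]
    refine Finset.sum_congr rfl fun t1 _ => Finset.sum_congr rfl fun t2 _ => ?_
    rw [mul_mul_mul_comm, ← chr_add]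
    congr 2
    ring
  -- L⁴ norm of T via Parseval
  have hT4 : ∑ x : ZMod N × ZMod N, ‖T x‖ ^ 4
      = (N:ℝ)^2 * ∑ c : ZMod N × ZMod N, ‖F c‖ ^ 2 := by
    have hx4 : ∀ z : ℂ, ‖z‖ ^ 4 = ‖z ^ 2‖ ^ 2 := by
      intro z; rw [norm_pow]; ring
    simp_rw [hx4]
    have hcplx : ((∑ x : ZMod N × ZMod N, ‖(T x) ^ 2‖ ^ 2 : ℝ) : ℂ)
        = (((N:ℝ)^2 * ∑ c : ZMod N × ZMod N, ‖F c‖ ^ 2 : ℝ) : ℂ) := by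
      rw [Complex.ofReal_sum]
      calc ∑ x : ZMod N × ZMod N, ((‖(T x) ^ 2‖ ^ 2 : ℝ) : ℂ)
          = ∑ x : ZMod N × ZMod N, (T x) ^ 2 * (starRingEnd ℂ) ((T x) ^ 2) :=
            Finset.sum_congr rfl fun x _ => habs2 _
        _ = ∑ x : ZMod N × ZMod N,
              (∑ c : ZMod N × ZMod N, F c * chr N (-(x.1 * c.1 + x.2 * c.2))) *
              (starRingEnd ℂ) (∑ c : ZMod N × ZMod N, F c * chr N (-(x.1 * c.1 + x.2 * c.2))) :=
            Finset.sum_congr rfl fun x _ => by rw [hTsq x]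
        _ = (N : ℂ)^2 * ∑ c : ZMod N × ZMod N, F c * (starRingEnd ℂ) (F c) := parseval_ext F
        _ = (N : ℂ)^2 * ∑ c : ZMod N × ZMod N, ((‖F c‖ ^ 2 : ℝ) : ℂ) := by
            rw [Finset.sum_congr rfl fun c _ => (habs2 (F c)).symm]
        _ = (((N:ℝ)^2 * ∑ c : ZMod N × ZMod N, ‖F c‖ ^ 2 : ℝ) : ℂ) := by
            push_cast; ring
    exact_mod_cast hcplx
  -- Cauchy-Schwarz + counting bound on F
  have hcount : ∀ c : ZMod N × ZMod N, ((solset N c.1 c.2).card : ℝ) ≤ (2:ℝ)^K := by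
    intro c
    have h1 := solset_card_le N hN ‹NeZero N› c.1 c.2
    have h2 : (2:ℕ)^N.primeFactors.card ≤ 2^K := Nat.pow_le_pow_right (by norm_num) hω
    exact_mod_cast h1.trans h2
  have hF2 : ∀ c : ZMod N × ZMod N, ‖F c‖ ^ 2
      ≤ (2:ℝ)^K * ∑ t ∈ solset N c.1 c.2,
          ‖g t‖ ^ 2 * ‖g (c.1 - t)‖ ^ 2 := by
    intro c
    have h1 : ‖F c‖ ≤ ∑ t ∈ solset N c.1 c.2, ‖g t * g (c.1 - t)‖ := by
      rw [hF]; exact norm_sum_le _ _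
    have h2 : ‖F c‖ ^ 2
        ≤ (∑ t ∈ solset N c.1 c.2, ‖g t * g (c.1 - t)‖) ^ 2 :=
      pow_le_pow_left₀ (norm_nonneg _) h1 2
    have h3 : (∑ t ∈ solset N c.1 c.2, ‖g t * g (c.1 - t)‖) ^ 2
        ≤ (∑ t ∈ solset N c.1 c.2, (1:ℝ) ^ 2) *
          ∑ t ∈ solset N c.1 c.2, ‖g t * g (c.1 - t)‖ ^ 2 := by
      have := Finset.sum_mul_sq_le_sq_mul_sq (solset N c.1 c.2) (fun _ => (1:ℝ))
        (fun t => ‖g t * g (c.1 - t)‖)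
      simpa using this
    have h4 : (∑ t ∈ solset N c.1 c.2, (1:ℝ) ^ 2) = ((solset N c.1 c.2).card : ℝ) := by simp
    have h5 : ∑ t ∈ solset N c.1 c.2, ‖g t * g (c.1 - t)‖ ^ 2
        = ∑ t ∈ solset N c.1 c.2, ‖g t‖ ^ 2 * ‖g (c.1 - t)‖ ^ 2 :=
      Finset.sum_congr rfl fun t _ => by rw [norm_mul, mul_pow]
    have h6 : 0 ≤ ∑ t ∈ solset N c.1 c.2, ‖g t‖ ^ 2 * ‖g (c.1 - t)‖ ^ 2 :=
      Finset.sum_nonneg fun t _ => mul_nonneg (sq_nonneg _) (sq_nonneg _)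
    calc ‖F c‖ ^ 2
        ≤ (∑ t ∈ solset N c.1 c.2, ‖g t * g (c.1 - t)‖) ^ 2 := h2
      _ ≤ ((solset N c.1 c.2).card : ℝ) *
            ∑ t ∈ solset N c.1 c.2, ‖g t‖ ^ 2 * ‖g (c.1 - t)‖ ^ 2 := by
          rw [← h4, ← h5]; exact h3
      _ ≤ (2:ℝ)^K * ∑ t ∈ solset N c.1 c.2,
            ‖g t‖ ^ 2 * ‖g (c.1 - t)‖ ^ 2 :=
          mul_le_mul_of_nonneg_right (hcount c) h6
  have hFsum : ∑ c : ZMod N × ZMod N, ∑ t ∈ solset N c.1 c.2,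
      ‖g t‖ ^ 2 * ‖g (c.1 - t)‖ ^ 2 = S ^ 2 := by
    rw [sum_solset_eq (N := N) (fun a b => ‖g a‖ ^ 2 * ‖g b‖ ^ 2)]
    rw [Fintype.sum_prod_type, ← hgsum, sq, Finset.sum_mul_sum]
  have hT4le : ∑ x : ZMod N × ZMod N, ‖T x‖ ^ 4 ≤ (N:ℝ)^2 * ((2:ℝ)^K * S^2) := by
    rw [hT4]
    refine mul_le_mul_of_nonneg_left ?_ (sq_nonneg _)
    calc ∑ c : ZMod N × ZMod N, ‖F c‖ ^ 2
        ≤ ∑ c : ZMod N × ZMod N, (2:ℝ)^K * ∑ t ∈ solset N c.1 c.2,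
            ‖g t‖ ^ 2 * ‖g (c.1 - t)‖ ^ 2 :=
          Finset.sum_le_sum fun c _ => hF2 c
      _ = (2:ℝ)^K * S^2 := by rw [← Finset.mul_sum, hFsum]
  -- step 1: the duality identity
  have hstep1 : ∑ x : ZMod N × ZMod N, f x * T x = (((N:ℝ) * S : ℝ) : ℂ) := by
    have h1 : ∑ x : ZMod N × ZMod N, f x * T x
        = ∑ t : ZMod N, g t * ∑ x : ZMod N × ZMod N, f x * chr N (-(x.1 * t + x.2 * t ^ 2)) := by
      rw [hT]
      simp only []
      calc ∑ x : ZMod N × ZMod N, f x * ∑ t : ZMod N, g t * chr N (-(x.1 * t + x.2 * t ^ 2))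
          = ∑ x : ZMod N × ZMod N, ∑ t : ZMod N,
              f x * (g t * chr N (-(x.1 * t + x.2 * t ^ 2))) :=
            Finset.sum_congr rfl fun x _ => Finset.mul_sum _ _ _
        _ = ∑ t : ZMod N, ∑ x : ZMod N × ZMod N,
              f x * (g t * chr N (-(x.1 * t + x.2 * t ^ 2))) := Finset.sum_comm
        _ = ∑ t : ZMod N, g t * ∑ x : ZMod N × ZMod N,
              f x * chr N (-(x.1 * t + x.2 * t ^ 2)) := by
            refine Finset.sum_congr rfl fun t _ => ?_
            rw [Finset.mul_sum]
            exact Finset.sum_congr rfl fun x _ => by ring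
    have h2 : ∀ t : ZMod N, ∑ x : ZMod N × ZMod N, f x * chr N (-(x.1 * t + x.2 * t ^ 2))
        = (N : ℂ) * dft N f (t, t ^ 2) := by
      intro t
      rw [h_dft (t, t ^ 2), ← mul_assoc, mul_inv_cancel₀ hNC, one_mul]
    calc ∑ x : ZMod N × ZMod N, f x * T x
        = ∑ t : ZMod N, g t * ((N : ℂ) * dft N f (t, t ^ 2)) := by
          rw [h1]; exact Finset.sum_congr rfl fun t _ => by rw [h2 t]
      _ = (N : ℂ) * ∑ t : ZMod N, dft N f (t, t ^ 2) * (starRingEnd ℂ) (dft N f (t, t ^ 2)) := by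
          rw [Finset.mul_sum]
          exact Finset.sum_congr rfl fun t _ => by rw [hg]; ring
      _ = (N : ℂ) * ∑ t : ZMod N, ((‖dft N f (t, t ^ 2)‖ ^ 2 : ℝ) : ℂ) := by
          rw [Finset.sum_congr rfl fun t _ => (habs2 _).symm]
      _ = (((N:ℝ) * S : ℝ) : ℂ) := by rw [hS]; push_cast; ring
  -- Hölder's inequality
  have hconj : Real.HolderConjugate ((4:ℝ)/3) 4 := Real.holderConjugate_iff.mpr ⟨by norm_num, by norm_num⟩
  have habsabs : ∀ z : ℂ, |‖z‖| = ‖z‖ :=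
    fun z => abs_of_nonneg (norm_nonneg z)
  have hold := Real.inner_le_Lp_mul_Lq (s := Finset.univ)
    (fun x : ZMod N × ZMod N => ‖f x‖)
    (fun x : ZMod N × ZMod N => ‖T x‖) hconj
  simp only [habsabs] at hold
  rw [show (1:ℝ)/((4:ℝ)/3) = 3/4 by norm_num, show (1:ℝ)/(4:ℝ) = 1/4 by norm_num] at hold
  have hr4 : ∀ z : ℂ, ‖z‖ ^ (4:ℝ) = ‖z‖ ^ (4:ℕ) := by
    intro z
    rw [show (4:ℝ) = ((4:ℕ):ℝ) by norm_num, Real.rpow_natCast]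
  simp only [hr4] at hold
  -- N * S ≤ A * (...)^(1/4)
  have hNS : (N:ℝ) * S ≤ A * ((N:ℝ)^2 * ((2:ℝ)^K * S^2)) ^ ((1:ℝ)/4) := by
    have e1 : (N:ℝ) * S = ‖∑ x : ZMod N × ZMod N, f x * T x‖ := by
      rw [hstep1, Complex.norm_real, Real.norm_eq_abs, abs_of_nonneg (mul_nonneg hNpos.le hS0)]
    have e2 : ‖∑ x : ZMod N × ZMod N, f x * T x‖
        ≤ ∑ x : ZMod N × ZMod N, ‖f x‖ * ‖T x‖ := by
      refine (norm_sum_le _ _).trans_eq ?_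
      exact Finset.sum_congr rfl fun x _ => norm_mul _ _
    have e3 : (∑ x : ZMod N × ZMod N, ‖T x‖ ^ (4:ℕ)) ^ ((1:ℝ)/4)
        ≤ ((N:ℝ)^2 * ((2:ℝ)^K * S^2)) ^ ((1:ℝ)/4) := by
      refine Real.rpow_le_rpow ?_ hT4le (by norm_num)
      exact Finset.sum_nonneg fun x _ => pow_nonneg (norm_nonneg _) _
    calc (N:ℝ) * S ≤ ∑ x : ZMod N × ZMod N, ‖f x‖ * ‖T x‖ :=
          e1.trans_le e2
      _ ≤ (∑ x : ZMod N × ZMod N, ‖f x‖ ^ ((4:ℝ)/3)) ^ ((3:ℝ)/4) *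
            (∑ x : ZMod N × ZMod N, ‖T x‖ ^ (4:ℕ)) ^ ((1:ℝ)/4) := hold
      _ ≤ A * ((N:ℝ)^2 * ((2:ℝ)^K * S^2)) ^ ((1:ℝ)/4) := by
          rw [hA]
          exact mul_le_mul_of_nonneg_left e3 hA0
  -- simplify the quarter power
  have hquarter : ((N:ℝ)^2 * ((2:ℝ)^K * S^2)) ^ ((1:ℝ)/4)
      = (2:ℝ) ^ ((K:ℝ)/4) * ((N:ℝ) ^ ((1:ℝ)/2) * S ^ ((1:ℝ)/2)) := by
    rw [Real.mul_rpow (by positivity) (by positivity),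
        Real.mul_rpow (by positivity) (by positivity)]
    have hN2 : ((N:ℝ)^2) ^ ((1:ℝ)/4) = (N:ℝ) ^ ((1:ℝ)/2) := by
      rw [← Real.rpow_natCast (N:ℝ) 2, ← Real.rpow_mul hNpos.le]; norm_num
    have hS2 : (S^2) ^ ((1:ℝ)/4) = S ^ ((1:ℝ)/2) := by
      rw [← Real.rpow_natCast S 2, ← Real.rpow_mul hS0]; norm_num
    have h2K : ((2:ℝ)^K) ^ ((1:ℝ)/4) = (2:ℝ) ^ ((K:ℝ)/4) := by
      rw [← Real.rpow_natCast (2:ℝ) K, ← Real.rpow_mul (by norm_num)]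
      congr 1; ring
    rw [hN2, hS2, h2K]; ring
  rw [h_card, h_sum_par]
  rcases eq_or_lt_of_le hS0 with hSz | hSpos
  · rw [← hSz, mul_zero, Real.zero_rpow (by norm_num)]
    positivity
  · set n2 := (N:ℝ) ^ ((1:ℝ)/2) with hn2
    set s2 := S ^ ((1:ℝ)/2) with hs2
    have hn2pos : 0 < n2 := Real.rpow_pos_of_pos hNpos _
    have hs2pos : 0 < s2 := Real.rpow_pos_of_pos hSpos _
    have hn2sq : n2 * n2 = (N:ℝ) := by
      rw [hn2, ← Real.rpow_add hNpos]; norm_num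
    have hs2sq : s2 * s2 = S := by
      rw [hs2, ← Real.rpow_add hSpos]; norm_num
    have hmain : (n2 * s2) * (n2 * s2) ≤ (A * (2:ℝ) ^ ((K:ℝ)/4)) * (n2 * s2) := by
      calc (n2 * s2) * (n2 * s2) = (N:ℝ) * S := by rw [mul_mul_mul_comm, hn2sq, hs2sq]
        _ ≤ A * ((2:ℝ) ^ ((K:ℝ)/4) * (n2 * s2)) := by rw [← hquarter]; exact hNS
        _ = (A * (2:ℝ) ^ ((K:ℝ)/4)) * (n2 * s2) := by ring
    have hdiv : n2 * s2 ≤ A * (2:ℝ) ^ ((K:ℝ)/4) :=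
      le_of_mul_le_mul_right hmain (mul_pos hn2pos hs2pos)
    have hLHS : ((N:ℝ)⁻¹ * S) ^ ((1:ℝ)/2) = n2⁻¹ * s2 := by
      rw [Real.mul_rpow (inv_nonneg.mpr hNpos.le) hS0, Real.inv_rpow hNpos.le]
    rw [hLHS]
    have hsplit : n2⁻¹ * s2 = (N:ℝ)⁻¹ * (n2 * s2) := by
      rw [← hn2sq]; field_simp
    rw [hsplit]
    calc (N:ℝ)⁻¹ * (n2 * s2) ≤ (N:ℝ)⁻¹ * (A * (2:ℝ) ^ ((K:ℝ)/4)) :=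
        mul_le_mul_of_nonneg_left hdiv (inv_nonneg.mpr hNpos.le)
      _ = (2:ℝ) ^ ((K:ℝ)/4) * (N:ℝ)⁻¹ * A := by ring
end

section
/- For every ε > 0 there exists a constant C_ε > 0 such that for every squarefree positive integer N and every function f : (ℤ/Nℤ)² → ℂ whose Fourier transform f̂ is supported in the parabola Σ = {(t, t²) : t ∈ ℤ/Nℤ}, one has ( (1/N²) · Σ_{x∈(ℤ/Nℤ)²} |f(x)|⁴ )^{1/4} ≤ C_ε · N^{ε} · ( (1/N²) · Σ_{x∈(ℤ/Nℤ)²} |f(x)|² )^{1/2}. -/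
open scoped BigOperators

set_option linter.unusedSectionVars false

open Finset

namespace Ext

variable (N : ℕ) [NeZero N]

noncomputable def psi (k : ZMod N) : ℂ :=
  Complex.exp (-2 * Real.pi * Complex.I * ((k.val : ℕ) : ℂ) / (N : ℂ))

lemma psi_eq_pow (k : ZMod N) :
    psi N k = Complex.exp (-2 * Real.pi * Complex.I / (N : ℂ)) ^ (k.val) := by
  rw [psi, ← Complex.exp_nat_mul]
  ring_nf

lemma zeta_pow_N : Complex.exp (-2 * Real.pi * Complex.I / (N : ℂ)) ^ (N : ℕ) = 1 := by
  rw [← Complex.exp_nat_mul]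
  have hN : (N : ℂ) ≠ 0 := Nat.cast_ne_zero.2 (NeZero.ne N)
  have : (N : ℂ) * (-2 * Real.pi * Complex.I / (N : ℂ)) = -(2 * Real.pi * Complex.I) := by
    field_simp
  rw [this, Complex.exp_neg, Complex.exp_two_pi_mul_I, inv_one]

lemma psi_zero : psi N 0 = 1 := by
  simp [psi]

lemma psi_add (j k : ZMod N) : psi N (j + k) = psi N j * psi N k := by
  rw [psi_eq_pow, psi_eq_pow, psi_eq_pow, ← pow_add, ZMod.val_add]
  conv_rhs => rw [← Nat.div_add_mod (j.val + k.val) N]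
  rw [pow_add, pow_mul, zeta_pow_N, one_pow, one_mul]



lemma psi_conj (k : ZMod N) : (starRingEnd ℂ) (psi N k) = psi N (-k) := by
  have h1 : (starRingEnd ℂ) (psi N k) * psi N k = 1 := by
    rw [psi, ← Complex.exp_conj, ← Complex.exp_add]
    have : (starRingEnd ℂ) (-2 * Real.pi * Complex.I * ((k.val : ℕ) : ℂ) / (N : ℂ))
        = -(-2 * Real.pi * Complex.I * ((k.val : ℕ) : ℂ) / (N : ℂ)) := by
      simp only [map_div₀, map_mul, map_neg, map_ofNat, Complex.conj_I, map_natCast,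
        Complex.conj_ofReal]
      ring
    rw [this, neg_add_cancel, Complex.exp_zero]
  have h2 : psi N (-k) * psi N k = 1 := by
    rw [← psi_add, neg_add_cancel, psi_zero]
  have hne : psi N k ≠ 0 := Complex.exp_ne_zero _
  exact mul_right_cancel₀ hne (h1.trans h2.symm)

lemma psi_ne_one {a : ZMod N} (ha : a ≠ 0) : psi N a ≠ 1 := by
  intro h
  rw [psi, Complex.exp_eq_one_iff] at h
  obtain ⟨n, hn⟩ := h
  set v : ℂ := ((a.val : ℕ) : ℂ) with hv
  have hN : (N : ℂ) ≠ 0 := Nat.cast_ne_zero.2 (NeZero.ne N)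
  have hpi : (Real.pi : ℂ) ≠ 0 := by exact_mod_cast Real.pi_ne_zero
  have h2 : (2 : ℂ) * Real.pi * Complex.I ≠ 0 := by
    simp [Complex.I_ne_zero, hpi]
  have hn2 : v = (-n) * N := by
    apply mul_left_cancel₀ h2
    field_simp at hn
    linear_combination (-2 * Real.pi * Complex.I) * hn
  rw [hv] at hn2
  have hz2 : (a.val : ℤ) = -n * N := by exact_mod_cast hn2
  have hdvd : N ∣ a.val := by
    have : (N : ℤ) ∣ (a.val : ℤ) := ⟨-n, by linarith⟩
    exact_mod_cast this
  have := Nat.eq_zero_of_dvd_of_lt hdvd (ZMod.val_lt a)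
  exact ha (by rwa [← ZMod.val_eq_zero])

lemma psi_sum (a : ZMod N) :
    ∑ x : ZMod N, psi N (a * x) = if a = 0 then (N : ℂ) else 0 := by
  rcases eq_or_ne a 0 with rfl | ha
  · simp [psi_zero]
  · rw [if_neg ha]
    have key : psi N a * ∑ x : ZMod N, psi N (a * x) = ∑ x : ZMod N, psi N (a * x) := by
      rw [Finset.mul_sum]
      rw [← Equiv.sum_comp (Equiv.addRight (1 : ZMod N)) (fun x => psi N (a * x))]
      apply Finset.sum_congr rfl
      intro x _
      rw [← psi_add]
      have hx : (Equiv.addRight (1 : ZMod N)) x = x + 1 := rfl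
      rw [hx]
      congr 1
      ring
    have := sub_eq_zero.2 key
    rw [← sub_one_mul] at this
    rcases mul_eq_zero.1 this with h | h
    · exact absurd (sub_eq_zero.1 h) (psi_ne_one N ha)
    · exact h

noncomputable def dftx (f : ZMod N × ZMod N → ℂ) (m : ZMod N × ZMod N) : ℂ :=
  (N : ℂ)⁻¹ * ∑ x : ZMod N × ZMod N, f x * psi N (x.1 * m.1 + x.2 * m.2)

lemma sum2 (a : ZMod N × ZMod N) :
    ∑ m : ZMod N × ZMod N, psi N (a.1 * m.1 + a.2 * m.2)
      = if a = 0 then (N : ℂ) ^ 2 else 0 := by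
  rw [Fintype.sum_prod_type]
  simp_rw [psi_add]
  rw [← Finset.sum_mul_sum]
  rw [psi_sum, psi_sum]
  rcases eq_or_ne a.1 0 with h1 | h1 <;> rcases eq_or_ne a.2 0 with h2 | h2 <;>
    simp [h1, h2, Prod.ext_iff, sq]

lemma sum2' (x y : ZMod N × ZMod N) :
    ∑ m : ZMod N × ZMod N,
        psi N (x.1 * m.1 + x.2 * m.2) * psi N (-(y.1 * m.1 + y.2 * m.2))
      = if x = y then (N : ℂ) ^ 2 else 0 := by
  have h : ∀ m : ZMod N × ZMod N,
      psi N (x.1 * m.1 + x.2 * m.2) * psi N (-(y.1 * m.1 + y.2 * m.2))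
        = psi N ((x - y).1 * m.1 + (x - y).2 * m.2) := by
    intro m
    rw [← psi_add]
    congr 1
    simp [Prod.fst_sub, Prod.snd_sub]
    ring
  simp_rw [h]
  rw [sum2 N (x - y)]
  simp [sub_eq_zero]

lemma parseval (f g : ZMod N × ZMod N → ℂ) :
    ∑ m : ZMod N × ZMod N, dftx N f m * (starRingEnd ℂ) (dftx N g m)
      = ∑ x : ZMod N × ZMod N, f x * (starRingEnd ℂ) (g x) := by
  have hN : (N : ℂ) ≠ 0 := Nat.cast_ne_zero.2 (NeZero.ne N)
  have step : ∀ m : ZMod N × ZMod N,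
      dftx N f m * (starRingEnd ℂ) (dftx N g m)
        = (N : ℂ)⁻¹ * (N : ℂ)⁻¹ * ∑ x : ZMod N × ZMod N, ∑ y : ZMod N × ZMod N,
            f x * (starRingEnd ℂ) (g y) *
              (psi N (x.1 * m.1 + x.2 * m.2) * psi N (-(y.1 * m.1 + y.2 * m.2))) := by
    intro m
    rw [dftx, dftx, map_mul, map_inv₀, Complex.conj_natCast, map_sum]
    simp_rw [map_mul, psi_conj]
    rw [mul_mul_mul_comm, Finset.sum_mul_sum]
    congr 1
    apply Finset.sum_congr rfl
    intro x _
    apply Finset.sum_congr rfl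
    intro y _
    ring
  simp_rw [step]
  rw [← Finset.mul_sum]
  rw [Finset.sum_comm]
  have inner : ∀ x : ZMod N × ZMod N,
      (∑ m : ZMod N × ZMod N, ∑ y : ZMod N × ZMod N,
          f x * (starRingEnd ℂ) (g y) *
            (psi N (x.1 * m.1 + x.2 * m.2) * psi N (-(y.1 * m.1 + y.2 * m.2))))
        = (N : ℂ) ^ 2 * (f x * (starRingEnd ℂ) (g x)) := by
    intro x
    rw [Finset.sum_comm]
    have h1 : ∀ y : ZMod N × ZMod N,
        (∑ m : ZMod N × ZMod N, f x * (starRingEnd ℂ) (g y) *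
            (psi N (x.1 * m.1 + x.2 * m.2) * psi N (-(y.1 * m.1 + y.2 * m.2))))
          = f x * (starRingEnd ℂ) (g y) * (if x = y then (N : ℂ) ^ 2 else 0) := by
      intro y
      rw [← Finset.mul_sum, sum2']
    simp_rw [h1]
    rw [Finset.sum_eq_single x]
    · rw [if_pos rfl]; ring
    · intro y _ hyx
      rw [if_neg (fun h => hyx h.symm), mul_zero]
    · intro hx
      exact absurd (Finset.mem_univ x) hx
  simp_rw [inner]
  rw [← Finset.mul_sum]
  field_simp

lemma inversion (f : ZMod N × ZMod N → ℂ) (x : ZMod N × ZMod N) :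
    (N : ℂ)⁻¹ * ∑ m : ZMod N × ZMod N,
        dftx N f m * psi N (-(x.1 * m.1 + x.2 * m.2)) = f x := by
  have hN : (N : ℂ) ≠ 0 := Nat.cast_ne_zero.2 (NeZero.ne N)
  have step : ∀ m : ZMod N × ZMod N,
      dftx N f m * psi N (-(x.1 * m.1 + x.2 * m.2))
        = (N : ℂ)⁻¹ * ∑ y : ZMod N × ZMod N,
            f y * (psi N (y.1 * m.1 + y.2 * m.2) * psi N (-(x.1 * m.1 + x.2 * m.2))) := by
    intro m
    rw [dftx, mul_assoc, Finset.sum_mul]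
    simp_rw [mul_assoc]
  simp_rw [step]
  rw [← Finset.mul_sum, Finset.sum_comm]
  have h1 : ∀ y : ZMod N × ZMod N,
      (∑ m : ZMod N × ZMod N,
          f y * (psi N (y.1 * m.1 + y.2 * m.2) * psi N (-(x.1 * m.1 + x.2 * m.2))))
        = f y * (if y = x then (N : ℂ) ^ 2 else 0) := by
    intro y
    rw [← Finset.mul_sum, sum2']
  simp_rw [h1]
  rw [Finset.sum_eq_single x]
  · rw [if_pos rfl]
    show (N : ℂ)⁻¹ * ((N : ℂ)⁻¹ * (f x * (N : ℂ) ^ 2)) = f x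
    field_simp
  · intro y _ hyx
    rw [if_neg hyx, mul_zero]
  · intro hx
    exact absurd (Finset.mem_univ x) hx

def parabolax : Finset (ZMod N × ZMod N) :=
  Finset.univ.image (fun t : ZMod N => (t, t ^ 2))

lemma inv_parabola (f : ZMod N × ZMod N → ℂ)
    (hsupp : ∀ m : ZMod N × ZMod N, m ∉ parabolax N → dftx N f m = 0)
    (x : ZMod N × ZMod N) :
    f x = (N : ℂ)⁻¹ * ∑ t : ZMod N,
        dftx N f (t, t ^ 2) * psi N (-(x.1 * t + x.2 * t ^ 2)) := by
  conv_lhs => rw [← inversion N f x]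
  congr 1
  rw [← Finset.sum_subset (Finset.subset_univ (parabolax N))]
  · rw [parabolax, Finset.sum_image]
    intro t _ t' _ h
    exact congrArg Prod.fst h
  · intro m _ hm
    rw [hsupp m hm, zero_mul]

lemma sum2x (a : ZMod N × ZMod N) :
    ∑ x : ZMod N × ZMod N, psi N (x.1 * a.1 + x.2 * a.2)
      = if a = 0 then (N : ℂ) ^ 2 else 0 := by
  rw [← sum2 N a]
  apply Finset.sum_congr rfl
  intro x _
  congr 1
  ring

lemma sum2s (u v : ZMod N × ZMod N) :
    ∑ x : ZMod N × ZMod N,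
        psi N (x.1 * u.1 + x.2 * u.2) * psi N (-(x.1 * v.1 + x.2 * v.2))
      = if u = v then (N : ℂ) ^ 2 else 0 := by
  have h : ∀ x : ZMod N × ZMod N,
      psi N (x.1 * u.1 + x.2 * u.2) * psi N (-(x.1 * v.1 + x.2 * v.2))
        = psi N (x.1 * (u - v).1 + x.2 * (u - v).2) := by
    intro x
    rw [← psi_add]
    congr 1
    simp [Prod.fst_sub, Prod.snd_sub]
    ring
  simp_rw [h]
  rw [sum2x N (u - v)]
  simp [sub_eq_zero]

lemma dft_sq (f : ZMod N × ZMod N → ℂ)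
    (hsupp : ∀ m : ZMod N × ZMod N, m ∉ parabolax N → dftx N f m = 0)
    (s : ZMod N × ZMod N) :
    dftx N (fun x => f x * f x) s
      = (N : ℂ)⁻¹ * ∑ p : ZMod N × ZMod N,
          (if p.1 + p.2 = s.1 ∧ p.1 ^ 2 + p.2 ^ 2 = s.2
            then dftx N f (p.1, p.1 ^ 2) * dftx N f (p.2, p.2 ^ 2) else 0) := by
  have hN : (N : ℂ) ≠ 0 := Nat.cast_ne_zero.2 (NeZero.ne N)
  have expand : ∀ x : ZMod N × ZMod N,
      (f x * f x) * psi N (x.1 * s.1 + x.2 * s.2)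
        = (N : ℂ)⁻¹ * (N : ℂ)⁻¹ * ∑ p : ZMod N × ZMod N,
            dftx N f (p.1, p.1 ^ 2) * dftx N f (p.2, p.2 ^ 2) *
            (psi N (x.1 * s.1 + x.2 * s.2) *
              psi N (-(x.1 * (p.1 + p.2) + x.2 * (p.1 ^ 2 + p.2 ^ 2)))) := by
    intro x
    rw [inv_parabola N f hsupp x, Fintype.sum_prod_type]
    rw [mul_mul_mul_comm, Finset.sum_mul_sum, mul_assoc, Finset.sum_mul]
    congr 1
    apply Finset.sum_congr rfl
    intro t1 _
    rw [Finset.sum_mul]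
    apply Finset.sum_congr rfl
    intro t2 _
    dsimp only
    have hpsi : psi N (-(x.1 * t1 + x.2 * t1 ^ 2)) * psi N (-(x.1 * t2 + x.2 * t2 ^ 2))
        = psi N (-(x.1 * (t1 + t2) + x.2 * (t1 ^ 2 + t2 ^ 2))) := by
      rw [← psi_add]
      congr 1
      ring
    calc dftx N f (t1, t1 ^ 2) * psi N (-(x.1 * t1 + x.2 * t1 ^ 2)) *
          (dftx N f (t2, t2 ^ 2) * psi N (-(x.1 * t2 + x.2 * t2 ^ 2)))
          * psi N (x.1 * s.1 + x.2 * s.2)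
        = dftx N f (t1, t1 ^ 2) * dftx N f (t2, t2 ^ 2) *
            (psi N (x.1 * s.1 + x.2 * s.2) *
            (psi N (-(x.1 * t1 + x.2 * t1 ^ 2)) * psi N (-(x.1 * t2 + x.2 * t2 ^ 2)))) := by
          ring
      _ = dftx N f (t1, t1 ^ 2) * dftx N f (t2, t2 ^ 2) *
            (psi N (x.1 * s.1 + x.2 * s.2) *
            psi N (-(x.1 * (t1 + t2) + x.2 * (t1 ^ 2 + t2 ^ 2)))) := by rw [hpsi]
  rw [dftx]
  simp_rw [expand]
  rw [← Finset.mul_sum, Finset.sum_comm]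
  have inner : ∀ p : ZMod N × ZMod N,
      (∑ x : ZMod N × ZMod N,
          dftx N f (p.1, p.1 ^ 2) * dftx N f (p.2, p.2 ^ 2) *
          (psi N (x.1 * s.1 + x.2 * s.2) *
            psi N (-(x.1 * (p.1 + p.2) + x.2 * (p.1 ^ 2 + p.2 ^ 2)))))
        = (N : ℂ) ^ 2 *
            (if p.1 + p.2 = s.1 ∧ p.1 ^ 2 + p.2 ^ 2 = s.2
              then dftx N f (p.1, p.1 ^ 2) * dftx N f (p.2, p.2 ^ 2) else 0) := by
    intro p
    rw [← Finset.mul_sum]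
    rw [sum2s N s (p.1 + p.2, p.1 ^ 2 + p.2 ^ 2)]
    by_cases h : p.1 + p.2 = s.1 ∧ p.1 ^ 2 + p.2 ^ 2 = s.2
    · rw [if_pos h, if_pos]
      · ring
      · exact Prod.ext h.1.symm h.2.symm
    · rw [if_neg h, if_neg, mul_zero, mul_zero]
      intro hcontra
      exact h ⟨(congrArg Prod.fst hcontra).symm, (congrArg Prod.snd hcontra).symm⟩
  simp_rw [inner]
  rw [← Finset.mul_sum]
  field_simp

lemma card_sol_prime (p : ℕ) [NeZero p] (hp : p.Prime) (u v : ZMod p) :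
    Fintype.card {b : ZMod p // b ^ 2 + (u - b) ^ 2 = v} ≤ 2 := by
  haveI : Fact p.Prime := ⟨hp⟩
  rcases eq_or_ne p 2 with hp2 | hp2
  · subst hp2
    calc Fintype.card {b : ZMod 2 // b ^ 2 + (u - b) ^ 2 = v}
        ≤ Fintype.card (ZMod 2) := Fintype.card_subtype_le _
      _ = 2 := by simp
  · have h2 : (2 : ZMod p) ≠ 0 := by
      intro h
      have : (p : ℕ) ∣ 2 := by
        have := (ZMod.natCast_eq_zero_iff 2 p).1 (by exact_mod_cast h)
        exact this
      exact hp2 ((Nat.prime_dvd_prime_iff_eq hp Nat.prime_two).1 this)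
    rw [Fintype.card_subtype]
    by_cases hS : (Finset.univ.filter fun b : ZMod p => b ^ 2 + (u - b) ^ 2 = v).Nonempty
    · obtain ⟨b₀, hb₀⟩ := hS
      have hb₀' : b₀ ^ 2 + (u - b₀) ^ 2 = v := (Finset.mem_filter.1 hb₀).2
      have hsub : (Finset.univ.filter fun b : ZMod p => b ^ 2 + (u - b) ^ 2 = v)
          ⊆ {b₀, u - b₀} := by
        intro b hb
        have hb' : b ^ 2 + (u - b) ^ 2 = v := (Finset.mem_filter.1 hb).2
        have key : (b - b₀) * (2 * (b + b₀ - u)) = 0 := by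
          linear_combination hb' - hb₀'
        rcases mul_eq_zero.1 key with h | h
        · simp [Finset.mem_insert, sub_eq_zero.1 h]
        · rcases mul_eq_zero.1 h with h' | h'
          · exact absurd h' h2
          · have : b = u - b₀ := by linear_combination h'
            simp [Finset.mem_insert, this]
      calc (Finset.univ.filter fun b : ZMod p => b ^ 2 + (u - b) ^ 2 = v).card
          ≤ ({b₀, u - b₀} : Finset (ZMod p)).card := Finset.card_le_card hsub
        _ ≤ 2 := Finset.card_insert_le _ _ |>.trans (by simp)
    · rw [Finset.not_nonempty_iff_eq_empty.1 hS]
      simp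

lemma card_sol_le (N : ℕ) [NeZero N] (hsq : Squarefree N) (u v : ZMod N) :
    Fintype.card {b : ZMod N // b ^ 2 + (u - b) ^ 2 = v} ≤ 2 ^ N.primeFactors.card := by
  classical
  set P := N.primeFactors with hP
  haveI hne : ∀ i : ↥P, NeZero (i : ℕ) :=
    fun i => ⟨(Nat.prime_of_mem_primeFactors i.2).ne_zero⟩
  have hNM : (∏ i : ↥P, (i : ℕ)) = N := by
    exact (Finset.prod_attach P (fun i => i)).trans
      (Nat.prod_primeFactors_of_squarefree hsq)
  have hcop : Pairwise (Function.onFun Nat.Coprime fun i : ↥P => (i : ℕ)) := by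
    intro i j hij
    have hpi : Nat.Prime (i : ℕ) := Nat.prime_of_mem_primeFactors i.2
    have hpj : Nat.Prime (j : ℕ) := Nat.prime_of_mem_primeFactors j.2
    exact (Nat.coprime_primes hpi hpj).2 (fun h => hij (Subtype.ext h))
  have e0 := ZMod.prodEquivPi (fun i : ↥P => (i : ℕ)) hcop
  have e' : ZMod N ≃+* Π i : ↥P, ZMod (i : ℕ) :=
    (ZMod.ringEquivCongr hNM.symm).trans e0
  -- transfer the condition
  have hcond : ∀ b : ZMod N, (b ^ 2 + (u - b) ^ 2 = v) ↔
      ∀ i : ↥P, (e' b i) ^ 2 + (e' u i - e' b i) ^ 2 = e' v i := by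
    intro b
    constructor
    · intro h i
      have := congrArg e' h
      rw [map_add, map_pow, map_pow, map_sub] at this
      have := congrFun this i
      simpa using this
    · intro h
      apply e'.injective
      rw [map_add, map_pow, map_pow, map_sub]
      funext i
      simpa using h i
  -- inject into the product of solution sets
  have hinj : Function.Injective
      (fun b : {b : ZMod N // b ^ 2 + (u - b) ^ 2 = v} =>
        (fun i : ↥P => (⟨e' b.1 i, (hcond b.1).1 b.2 i⟩ :
          {z : ZMod (i : ℕ) // z ^ 2 + (e' u i - z) ^ 2 = e' v i}))) := by
    intro b b' h
    apply Subtype.ext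
    apply e'.injective
    funext i
    exact congrArg Subtype.val (congrFun h i)
  calc Fintype.card {b : ZMod N // b ^ 2 + (u - b) ^ 2 = v}
      ≤ Fintype.card (Π i : ↥P, {z : ZMod (i : ℕ) // z ^ 2 + (e' u i - z) ^ 2 = e' v i}) :=
        Fintype.card_le_of_injective _ hinj
    _ = ∏ i : ↥P, Fintype.card {z : ZMod (i : ℕ) // z ^ 2 + (e' u i - z) ^ 2 = e' v i} :=
        Fintype.card_pi
    _ ≤ ∏ _i : ↥P, 2 := by
        apply Finset.prod_le_prod'
        intro i _
        exact card_sol_prime (i : ℕ) (Nat.prime_of_mem_primeFactors i.2) _ _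
    _ = 2 ^ P.card := by simp [Finset.prod_const, Fintype.card_coe]

lemma card_fiber_le (hsq : Squarefree N) (s : ZMod N × ZMod N) :
    (Finset.univ.filter fun p : ZMod N × ZMod N =>
        p.1 + p.2 = s.1 ∧ p.1 ^ 2 + p.2 ^ 2 = s.2).card
      ≤ 2 ^ N.primeFactors.card := by
  classical
  have step1 : (Finset.univ.filter fun p : ZMod N × ZMod N =>
        p.1 + p.2 = s.1 ∧ p.1 ^ 2 + p.2 ^ 2 = s.2).card
      ≤ (Finset.univ.filter fun b : ZMod N => b ^ 2 + (s.1 - b) ^ 2 = s.2).card := by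
    apply Finset.card_le_card_of_injOn (fun p => p.1)
    · intro p hp
      obtain ⟨h1, h2⟩ := (Finset.mem_filter.1 hp).2
      rw [Finset.mem_coe, Finset.mem_filter]
      refine ⟨Finset.mem_univ _, ?_⟩
      have hp2 : p.2 = s.1 - p.1 := by rw [← h1]; ring
      rw [← h2, hp2]
    · intro p hp q hq hpq
      obtain ⟨h1, _⟩ := (Finset.mem_filter.1 hp).2
      obtain ⟨h1', _⟩ := (Finset.mem_filter.1 hq).2
      have h2 : p.1 = q.1 := hpq
      have h3 : p.1 + p.2 = q.1 + q.2 := h1.trans h1'.symm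
      rw [h2] at h3
      exact Prod.ext h2 (add_left_cancel h3)
  calc _ ≤ (Finset.univ.filter fun b : ZMod N => b ^ 2 + (s.1 - b) ^ 2 = s.2).card := step1
    _ = Fintype.card {b : ZMod N // b ^ 2 + (s.1 - b) ^ 2 = s.2} :=
        (Fintype.card_subtype _).symm
    _ ≤ 2 ^ N.primeFactors.card := card_sol_le N hsq s.1 s.2

lemma divisor_bound (δ : ℝ) (hδ : 0 < δ) :
    ∃ C : ℝ, 1 ≤ C ∧ ∀ n : ℕ, Squarefree n →
      ((2 : ℝ) ^ n.primeFactors.card ≤ C * (n : ℝ) ^ δ) := by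
  set B : ℕ := ⌈(2 : ℝ) ^ (1 / δ)⌉₊ with hB
  refine ⟨2 ^ B, one_le_pow₀ (by norm_num), ?_⟩
  intro n hn
  have hn0 : 0 < n := Nat.pos_of_ne_zero (by rintro rfl; exact not_squarefree_zero hn)
  set P := n.primeFactors with hP
  have key : ∀ p ∈ P, ¬ (p < B) → (2 : ℝ) ≤ (p : ℝ) ^ δ := by
    intro p hp hpB
    push_neg at hpB
    have h1 : (2 : ℝ) ^ (1 / δ) ≤ (p : ℝ) := by
      calc (2 : ℝ) ^ (1 / δ) ≤ (B : ℝ) := Nat.le_ceil _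
        _ ≤ (p : ℝ) := by exact_mod_cast hpB
    calc (2 : ℝ) = ((2 : ℝ) ^ (1 / δ)) ^ δ := by
          rw [← Real.rpow_mul (by norm_num : (0:ℝ) ≤ 2), one_div,
            inv_mul_cancel₀ hδ.ne', Real.rpow_one]
      _ ≤ (p : ℝ) ^ δ := Real.rpow_le_rpow (Real.rpow_nonneg (by norm_num) _) h1 hδ.le
  have split : (2 : ℝ) ^ P.card = (∏ p ∈ P.filter (fun p => p < B), (2 : ℝ)) *
      (∏ p ∈ P.filter (fun p => ¬ (p < B)), (2 : ℝ)) := by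
    rw [Finset.prod_filter_mul_prod_filter_not, Finset.prod_const]
  have part1 : (∏ p ∈ P.filter (fun p => p < B), (2 : ℝ)) ≤ 2 ^ B := by
    rw [Finset.prod_const]
    apply pow_le_pow_right₀ (by norm_num)
    calc (P.filter (fun p => p < B)).card ≤ (Finset.range B).card := by
          apply Finset.card_le_card
          intro p hp
          rw [Finset.mem_range]
          exact (Finset.mem_filter.1 hp).2
      _ = B := Finset.card_range B
  have part2 : (∏ p ∈ P.filter (fun p => ¬ (p < B)), (2 : ℝ)) ≤ (n : ℝ) ^ δ := by
    calc (∏ p ∈ P.filter (fun p => ¬ (p < B)), (2 : ℝ))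
        ≤ ∏ p ∈ P.filter (fun p => ¬ (p < B)), ((p : ℝ) ^ δ) := by
          apply Finset.prod_le_prod (fun _ _ => by norm_num)
          intro p hp
          exact key p (Finset.mem_filter.1 hp).1 (Finset.mem_filter.1 hp).2
      _ = ((∏ p ∈ P.filter (fun p => ¬ (p < B)), p : ℕ) : ℝ) ^ δ := by
          rw [Nat.cast_prod]
          exact Real.finset_prod_rpow _ _ (fun p _ => by positivity) δ
      _ ≤ (n : ℝ) ^ δ := by
          apply Real.rpow_le_rpow (by positivity) _ hδ.le
          have hdvd : (∏ p ∈ P.filter (fun p => ¬ (p < B)), p) ∣ n := by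
            calc (∏ p ∈ P.filter (fun p => ¬ (p < B)), p) ∣ ∏ p ∈ P, p :=
                Finset.prod_dvd_prod_of_subset _ _ _ (Finset.filter_subset _ _)
              _ = n := Nat.prod_primeFactors_of_squarefree hn
          exact_mod_cast Nat.le_of_dvd hn0 hdvd
  calc (2 : ℝ) ^ P.card = _ * _ := split
    _ ≤ (2 : ℝ) ^ B * (n : ℝ) ^ δ := by
        apply mul_le_mul part1 part2 (Finset.prod_nonneg (fun _ _ => by norm_num))
          (by positivity)

variable (f : ZMod N × ZMod N → ℂ)

lemma sum_abs4_eq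
    (hsupp : ∀ m : ZMod N × ZMod N, m ∉ parabolax N → dftx N f m = 0) :
    ∑ x : ZMod N × ZMod N, ‖f x‖ ^ 4
      = ((N : ℝ) ^ 2)⁻¹ * ∑ s : ZMod N × ZMod N,
          Complex.normSq (∑ p : ZMod N × ZMod N,
            (if p.1 + p.2 = s.1 ∧ p.1 ^ 2 + p.2 ^ 2 = s.2
              then dftx N f (p.1, p.1 ^ 2) * dftx N f (p.2, p.2 ^ 2) else 0)) := by
  have hpars := parseval N (fun x => f x * f x) (fun x => f x * f x)
  simp_rw [dft_sq N f hsupp] at hpars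
  apply Complex.ofReal_injective
  have L : ∑ m : ZMod N × ZMod N,
      ((N : ℂ)⁻¹ * ∑ p : ZMod N × ZMod N,
        (if p.1 + p.2 = m.1 ∧ p.1 ^ 2 + p.2 ^ 2 = m.2
          then dftx N f (p.1, p.1 ^ 2) * dftx N f (p.2, p.2 ^ 2) else 0)) *
      (starRingEnd ℂ) ((N : ℂ)⁻¹ * ∑ p : ZMod N × ZMod N,
        (if p.1 + p.2 = m.1 ∧ p.1 ^ 2 + p.2 ^ 2 = m.2
          then dftx N f (p.1, p.1 ^ 2) * dftx N f (p.2, p.2 ^ 2) else 0))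
      = ((((N : ℝ) ^ 2)⁻¹ * ∑ s : ZMod N × ZMod N,
          Complex.normSq (∑ p : ZMod N × ZMod N,
            (if p.1 + p.2 = s.1 ∧ p.1 ^ 2 + p.2 ^ 2 = s.2
              then dftx N f (p.1, p.1 ^ 2) * dftx N f (p.2, p.2 ^ 2) else 0)) : ℝ) : ℂ) := by
    push_cast
    rw [Finset.mul_sum]
    apply Finset.sum_congr rfl
    intro m _
    rw [Complex.mul_conj, map_mul]
    push_cast
    congr 1
    rw [Complex.normSq_inv, Complex.normSq_natCast]
    push_cast
    ring
  have R : ∑ x : ZMod N × ZMod N, (f x * f x) * (starRingEnd ℂ) (f x * f x)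
      = ((∑ x : ZMod N × ZMod N, ‖f x‖ ^ 4 : ℝ) : ℂ) := by
    push_cast
    apply Finset.sum_congr rfl
    intro x _
    rw [Complex.mul_conj, map_mul]
    push_cast
    rw [← Complex.sq_norm]
    push_cast
    ring
  rw [← L, ← R]
  exact hpars.symm

lemma sum_abs2_eq
    (hsupp : ∀ m : ZMod N × ZMod N, m ∉ parabolax N → dftx N f m = 0) :
    ∑ x : ZMod N × ZMod N, ‖f x‖ ^ 2
      = ∑ t : ZMod N, Complex.normSq (dftx N f (t, t ^ 2)) := by
  have hpars := parseval N f f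
  apply Complex.ofReal_injective
  have L : ∑ m : ZMod N × ZMod N, dftx N f m * (starRingEnd ℂ) (dftx N f m)
      = ((∑ t : ZMod N, Complex.normSq (dftx N f (t, t ^ 2)) : ℝ) : ℂ) := by
    rw [← Finset.sum_subset (Finset.subset_univ (parabolax N))]
    · rw [parabolax, Finset.sum_image]
      · push_cast
        apply Finset.sum_congr rfl
        intro t _
        rw [Complex.mul_conj]
      · intro t _ t' _ h
        exact congrArg Prod.fst h
    · intro m _ hm
      rw [hsupp m hm, zero_mul]
  have R : ∑ x : ZMod N × ZMod N, f x * (starRingEnd ℂ) (f x)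
      = ((∑ x : ZMod N × ZMod N, ‖f x‖ ^ 2 : ℝ) : ℂ) := by
    push_cast
    apply Finset.sum_congr rfl
    intro x _
    rw [Complex.mul_conj, ← Complex.sq_norm]
    push_cast
    ring
  rw [← L, ← R]
  exact hpars.symm

lemma normSq_g_le (hsq : Squarefree N) (s : ZMod N × ZMod N) :
    Complex.normSq (∑ p : ZMod N × ZMod N,
        (if p.1 + p.2 = s.1 ∧ p.1 ^ 2 + p.2 ^ 2 = s.2
          then dftx N f (p.1, p.1 ^ 2) * dftx N f (p.2, p.2 ^ 2) else 0))
      ≤ (2 ^ N.primeFactors.card : ℝ) * ∑ p : ZMod N × ZMod N,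
          (if p.1 + p.2 = s.1 ∧ p.1 ^ 2 + p.2 ^ 2 = s.2
            then Complex.normSq (dftx N f (p.1, p.1 ^ 2)) *
              Complex.normSq (dftx N f (p.2, p.2 ^ 2)) else 0) := by
  classical
  set F := Finset.univ.filter fun p : ZMod N × ZMod N =>
    p.1 + p.2 = s.1 ∧ p.1 ^ 2 + p.2 ^ 2 = s.2 with hF
  have hsum : (∑ p : ZMod N × ZMod N,
      (if p.1 + p.2 = s.1 ∧ p.1 ^ 2 + p.2 ^ 2 = s.2
        then dftx N f (p.1, p.1 ^ 2) * dftx N f (p.2, p.2 ^ 2) else 0))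
      = ∑ p ∈ F, dftx N f (p.1, p.1 ^ 2) * dftx N f (p.2, p.2 ^ 2) := by
    rw [Finset.sum_filter]
  have hsum2 : (∑ p : ZMod N × ZMod N,
      (if p.1 + p.2 = s.1 ∧ p.1 ^ 2 + p.2 ^ 2 = s.2
        then Complex.normSq (dftx N f (p.1, p.1 ^ 2)) *
          Complex.normSq (dftx N f (p.2, p.2 ^ 2)) else 0))
      = ∑ p ∈ F, Complex.normSq (dftx N f (p.1, p.1 ^ 2)) *
          Complex.normSq (dftx N f (p.2, p.2 ^ 2)) := by
    rw [Finset.sum_filter]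
  rw [hsum, hsum2]
  calc Complex.normSq (∑ p ∈ F, dftx N f (p.1, p.1 ^ 2) * dftx N f (p.2, p.2 ^ 2))
      = ‖∑ p ∈ F, dftx N f (p.1, p.1 ^ 2) * dftx N f (p.2, p.2 ^ 2)‖ ^ 2 := by
        rw [Complex.sq_norm]
    _ ≤ (∑ p ∈ F, ‖dftx N f (p.1, p.1 ^ 2) * dftx N f (p.2, p.2 ^ 2)‖) ^ 2 := by
        apply pow_le_pow_left₀ (norm_nonneg _)
        exact norm_sum_le _ _
    _ ≤ F.card * ∑ p ∈ F, ‖dftx N f (p.1, p.1 ^ 2) * dftx N f (p.2, p.2 ^ 2)‖ ^ 2 :=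
        sq_sum_le_card_mul_sum_sq
    _ ≤ (2 ^ N.primeFactors.card : ℝ) *
          ∑ p ∈ F, ‖dftx N f (p.1, p.1 ^ 2) * dftx N f (p.2, p.2 ^ 2)‖ ^ 2 := by
        apply mul_le_mul_of_nonneg_right _ (Finset.sum_nonneg fun p _ => by positivity)
        exact_mod_cast card_fiber_le N hsq s
    _ = (2 ^ N.primeFactors.card : ℝ) *
          ∑ p ∈ F, Complex.normSq (dftx N f (p.1, p.1 ^ 2)) *
            Complex.normSq (dftx N f (p.2, p.2 ^ 2)) := by
        congr 1
        apply Finset.sum_congr rfl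
        intro p _
        rw [norm_mul, mul_pow, Complex.sq_norm, Complex.sq_norm]

lemma sum_ite_sq :
    ∑ s : ZMod N × ZMod N, ∑ p : ZMod N × ZMod N,
        (if p.1 + p.2 = s.1 ∧ p.1 ^ 2 + p.2 ^ 2 = s.2
          then Complex.normSq (dftx N f (p.1, p.1 ^ 2)) *
            Complex.normSq (dftx N f (p.2, p.2 ^ 2)) else 0)
      = (∑ t : ZMod N, Complex.normSq (dftx N f (t, t ^ 2))) ^ 2 := by
  classical
  rw [Finset.sum_comm]
  have inner : ∀ p : ZMod N × ZMod N,
      (∑ s : ZMod N × ZMod N,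
        (if p.1 + p.2 = s.1 ∧ p.1 ^ 2 + p.2 ^ 2 = s.2
          then Complex.normSq (dftx N f (p.1, p.1 ^ 2)) *
            Complex.normSq (dftx N f (p.2, p.2 ^ 2)) else 0))
      = Complex.normSq (dftx N f (p.1, p.1 ^ 2)) *
          Complex.normSq (dftx N f (p.2, p.2 ^ 2)) := by
    intro p
    rw [Finset.sum_eq_single (p.1 + p.2, p.1 ^ 2 + p.2 ^ 2)]
    · rw [if_pos ⟨rfl, rfl⟩]
    · intro s _ hs
      rw [if_neg]
      intro h
      exact hs (by rw [h.1, h.2])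
    · intro h
      exact absurd (Finset.mem_univ _) h
  simp_rw [inner]
  rw [sq, Fintype.sum_prod_type, Finset.sum_mul_sum]

end Ext

theorem extension_dual (ε : ℝ) (hε : 0 < ε) :
    ∃ C : ℝ, 0 < C ∧ ∀ (N : ℕ) [NeZero N], Squarefree N →
      ∀ f : ZMod N × ZMod N → ℂ,
        (∀ m : ZMod N × ZMod N, m ∉ parabola N → dft N f m = 0) →
        (((N : ℝ) ^ 2)⁻¹ *
            ∑ x : ZMod N × ZMod N, ‖f x‖ ^ 4) ^ ((1 : ℝ) / 4) ≤
          C * (N : ℝ) ^ ε *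
            (((N : ℝ) ^ 2)⁻¹ *
              ∑ x : ZMod N × ZMod N, ‖f x‖ ^ 2) ^ ((1 : ℝ) / 2) := by
  obtain ⟨C₀, hC₀1, hC₀⟩ := Ext.divisor_bound (4 * ε) (by positivity)
  refine ⟨C₀, lt_of_lt_of_le one_pos hC₀1, ?_⟩
  intro N _ hsq f hsupp
  have hsupp' : ∀ m : ZMod N × ZMod N, m ∉ Ext.parabolax N → Ext.dftx N f m = 0 := hsupp
  set A := ∑ x : ZMod N × ZMod N, ‖f x‖ ^ 4 with hA
  set E := ∑ x : ZMod N × ZMod N, ‖f x‖ ^ 2 with hE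
  have hNR : (0 : ℝ) < (N : ℝ) := by
    exact_mod_cast Nat.pos_of_ne_zero (NeZero.ne N)
  have hA0 : 0 ≤ A := Finset.sum_nonneg fun x _ => by positivity
  have hE0 : 0 ≤ E := Finset.sum_nonneg fun x _ => by positivity
  set R : ℝ := 2 ^ N.primeFactors.card with hR
  have hR0 : (0 : ℝ) ≤ R := by positivity
  set Y : ℝ := ((N : ℝ) ^ 2)⁻¹ * E with hY
  have hY0 : 0 ≤ Y := by positivity
  -- main inequality A ≤ (N²)⁻¹ * (R * E²)
  have hmain : A ≤ ((N : ℝ) ^ 2)⁻¹ * (R * E ^ 2) := by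
    rw [hA, Ext.sum_abs4_eq N f hsupp']
    apply mul_le_mul_of_nonneg_left _ (by positivity)
    calc ∑ s : ZMod N × ZMod N, Complex.normSq (∑ p : ZMod N × ZMod N,
            (if p.1 + p.2 = s.1 ∧ p.1 ^ 2 + p.2 ^ 2 = s.2
              then Ext.dftx N f (p.1, p.1 ^ 2) * Ext.dftx N f (p.2, p.2 ^ 2) else 0))
        ≤ ∑ s : ZMod N × ZMod N, R * ∑ p : ZMod N × ZMod N,
            (if p.1 + p.2 = s.1 ∧ p.1 ^ 2 + p.2 ^ 2 = s.2
              then Complex.normSq (Ext.dftx N f (p.1, p.1 ^ 2)) *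
                Complex.normSq (Ext.dftx N f (p.2, p.2 ^ 2)) else 0) :=
          Finset.sum_le_sum fun s _ => Ext.normSq_g_le N f hsq s
      _ = R * ∑ s : ZMod N × ZMod N, ∑ p : ZMod N × ZMod N,
            (if p.1 + p.2 = s.1 ∧ p.1 ^ 2 + p.2 ^ 2 = s.2
              then Complex.normSq (Ext.dftx N f (p.1, p.1 ^ 2)) *
                Complex.normSq (Ext.dftx N f (p.2, p.2 ^ 2)) else 0) := by
          rw [Finset.mul_sum]
      _ = R * (∑ t : ZMod N, Complex.normSq (Ext.dftx N f (t, t ^ 2))) ^ 2 := by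
          rw [Ext.sum_ite_sq N f]
      _ = R * E ^ 2 := by rw [hE, Ext.sum_abs2_eq N f hsupp']
  have hXle : ((N : ℝ) ^ 2)⁻¹ * A ≤ R * Y ^ 2 := by
    calc ((N : ℝ) ^ 2)⁻¹ * A ≤ ((N : ℝ) ^ 2)⁻¹ * (((N : ℝ) ^ 2)⁻¹ * (R * E ^ 2)) :=
          mul_le_mul_of_nonneg_left hmain (by positivity)
      _ = R * Y ^ 2 := by rw [hY]; ring
  have hX0 : 0 ≤ ((N : ℝ) ^ 2)⁻¹ * A := by positivity
  have hRle : R ≤ C₀ * (N : ℝ) ^ (4 * ε) := hC₀ N hsq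
  have hsq14 : (Y ^ 2) ^ ((1 : ℝ) / 4) = Y ^ ((1 : ℝ) / 2) := by
    rw [← Real.rpow_natCast Y 2, ← Real.rpow_mul hY0]
    norm_num
  have hN4 : (((N : ℝ) ^ (4 * ε)) : ℝ) ^ ((1 : ℝ) / 4) = (N : ℝ) ^ ε := by
    rw [← Real.rpow_mul hNR.le]
    congr 1
    ring
  calc (((N : ℝ) ^ 2)⁻¹ * A) ^ ((1 : ℝ) / 4)
      ≤ (C₀ * (N : ℝ) ^ (4 * ε) * Y ^ 2) ^ ((1 : ℝ) / 4) := by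
        apply Real.rpow_le_rpow hX0 _ (by norm_num)
        exact hXle.trans (mul_le_mul_of_nonneg_right hRle (by positivity))
    _ = (C₀ * (N : ℝ) ^ (4 * ε)) ^ ((1 : ℝ) / 4) * Y ^ ((1 : ℝ) / 2) := by
        rw [Real.mul_rpow (by positivity) (by positivity), hsq14]
    _ = C₀ ^ ((1 : ℝ) / 4) * (N : ℝ) ^ ε * Y ^ ((1 : ℝ) / 2) := by
        rw [Real.mul_rpow (by positivity) (by positivity), hN4]
    _ ≤ C₀ * (N : ℝ) ^ ε * Y ^ ((1 : ℝ) / 2) := by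
        have hC14 : C₀ ^ ((1 : ℝ) / 4) ≤ C₀ := by
          calc C₀ ^ ((1 : ℝ) / 4) ≤ C₀ ^ (1 : ℝ) :=
                Real.rpow_le_rpow_of_exponent_le hC₀1 (by norm_num)
            _ = C₀ := Real.rpow_one C₀
        apply mul_le_mul_of_nonneg_right _ (by positivity)
        exact mul_le_mul_of_nonneg_right hC14 (by positivity)
end
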